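/- arXiv:1612.06143 — 8 statements merged into one kernel-verified Lean document; each statement's English description precedes it below -/
import Mathlib

section
/- Let Φ be a crystallographic root system and β₁, β₂, β₃ ∈ Φ be roots such that β₁ + β₂ + β₃ ∈ Φ and βᵢ ≠ -βⱼ for all i, j ∈ {1,2,3}. Then at least two of the three sums βᵢ + βⱼ (with i ≠ j) belong to Φ. -/
local notation "⟪" x ", " y "⟫" => @inner ℝ _ _ x y

/-- A finite (crystallographic) root system in a real inner product space. -/
structure CrystRS (E : Type) [NormedAddCommGroup E] [InnerProductSpace ℝ E] where
  roots : Set E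
  finite : roots.Finite
  nonzero : ∀ β ∈ roots, β ≠ (0 : E)
  neg_mem : ∀ β ∈ roots, -β ∈ roots
  cartan : ∀ β ∈ roots, ∀ γ ∈ roots, ∃ n : ℤ, 2 * ⟪β, γ⟫ = (n : ℝ) * ⟪γ, γ⟫
  reflect : ∀ β ∈ roots, ∀ γ ∈ roots, β - (2 * ⟪β, γ⟫ / ⟪γ, γ⟫) • γ ∈ roots

namespace CrystRS

variable {E : Type} [NormedAddCommGroup E] [InnerProductSpace ℝ E]

/-- Irreducibility: the set of roots admits no nontrivial orthogonal decomposition. -/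
def Irred (R : CrystRS E) : Prop :=
  ∀ A B : Set E, R.roots = A ∪ B → (∀ a ∈ A, ∀ b ∈ B, ⟪a, b⟫ = 0) → A = ∅ ∨ B = ∅

end CrystRS

/-- A root system equipped with a system of simple roots (hence a positive system). -/
structure BasedRS (E : Type) [NormedAddCommGroup E] [InnerProductSpace ℝ E]
    extends CrystRS E where
  simple : Finset E
  simple_sub : (simple : Set E) ⊆ roots
  simple_indep : LinearIndependent ℝ (fun α : {x // x ∈ simple} => (α : E))
  decomp : ∀ β ∈ roots,
    β ∈ AddSubmonoid.closure (simple : Set E) ∨ -β ∈ AddSubmonoid.closure (simple : Set E)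

/-- `γ - β` is a nonnegative integer combination of elements of `P`. -/
def leRel {E : Type} [NormedAddCommGroup E] [InnerProductSpace ℝ E]
    (P : Set E) (β γ : E) : Prop := γ - β ∈ AddSubmonoid.closure P

/-- The indecomposable elements of `P` (the simple roots of a positive system `P`). -/
def SimpleOf {E : Type} [NormedAddCommGroup E] [InnerProductSpace ℝ E]
    (P : Set E) : Set E := {β ∈ P | ∀ γ ∈ P, ∀ δ ∈ P, β ≠ γ + δ}

/-- `C` is an irreducible component of `Ψ`: nonempty, orthogonal to the rest of `Ψ`,
and admitting no further nontrivial orthogonal decomposition. -/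
def IsComponent {E : Type} [NormedAddCommGroup E] [InnerProductSpace ℝ E]
    (Ψ C : Set E) : Prop :=
  C ⊆ Ψ ∧ C.Nonempty ∧ (∀ a ∈ C, ∀ b ∈ Ψ \ C, ⟪a, b⟫ = 0) ∧
    ∀ A B : Set E, C = A ∪ B → (∀ a ∈ A, ∀ b ∈ B, ⟪a, b⟫ = 0) → A = ∅ ∨ B = ∅

namespace BasedRS

variable {E : Type} [NormedAddCommGroup E] [InnerProductSpace ℝ E] (R : BasedRS E)

/-- The positive roots: roots that are nonnegative integer combinations of simple roots. -/
def pos : Set E := {β ∈ R.roots | β ∈ AddSubmonoid.closure (R.simple : Set E)}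

/-- The standard partial order: `γ - β` is a nonnegative integer combination of
simple roots. -/
def le (β γ : E) : Prop := γ - β ∈ AddSubmonoid.closure (R.simple : Set E)

def lt (β γ : E) : Prop := R.le β γ ∧ β ≠ γ

/-- An abelian ideal of the positive system: upward closed, and no two of its
elements sum to a root. -/
def IsAbelianIdeal (I : Set E) : Prop :=
  I ⊆ R.pos ∧ (∀ β ∈ I, ∀ γ ∈ R.pos, R.le β γ → γ ∈ I) ∧
    ∀ β ∈ I, ∀ γ ∈ I, β + γ ∉ R.roots

/-- A short root: of minimal length among the roots. -/
def IsShort (β : E) : Prop := β ∈ R.roots ∧ ∀ γ ∈ R.roots, ‖β‖ ≤ ‖γ‖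

/-- A long root: of maximal length among the roots. -/
def IsLong (β : E) : Prop := β ∈ R.roots ∧ ∀ γ ∈ R.roots, ‖γ‖ ≤ ‖β‖

/-- `θ` is the highest root. -/
def IsHighest (θ : E) : Prop := θ ∈ R.pos ∧ ∀ β ∈ R.roots, R.le β θ

/-- The coefficient of the simple root `α` in `β` equals `1`. -/
def coeffOne (α β : E) : Prop :=
  β - α ∈ Submodule.span ℤ ((R.simple : Set E) \ {α})

end BasedRS

namespace CrystRS

variable {E : Type} [NormedAddCommGroup E] [InnerProductSpace ℝ E]

lemma inner_self_pos' {x : E} (h : x ≠ 0) : (0:ℝ) < ⟪x, x⟫ :=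
  lt_of_le_of_ne real_inner_self_nonneg (fun he => h (inner_self_eq_zero.mp he.symm))

lemma sub_mem_of_inner_pos (R : CrystRS E) {β γ : E} (hβ : β ∈ R.roots)
    (hγ : γ ∈ R.roots) (hne : β ≠ γ) (hpos : 0 < ⟪β, γ⟫) : β - γ ∈ R.roots := by
  obtain ⟨n, hn⟩ := R.cartan β hβ γ hγ
  obtain ⟨m, hm⟩ := R.cartan γ hγ β hβ
  have hγγ : (0:ℝ) < ⟪γ, γ⟫ := inner_self_pos' (R.nonzero γ hγ)
  have hββ : (0:ℝ) < ⟪β, β⟫ := inner_self_pos' (R.nonzero β hβ)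
  have hcomm : ⟪γ, β⟫ = ⟪β, γ⟫ := real_inner_comm β γ
  have hn1 : 1 ≤ n := by
    by_contra hcon
    push_neg at hcon
    have : (n:ℝ) ≤ 0 := by exact_mod_cast Int.lt_add_one_iff.mp (by omega : n < 0 + 1)
    nlinarith
  have hm1 : 1 ≤ m := by
    by_contra hcon
    push_neg at hcon
    have : (m:ℝ) ≤ 0 := by exact_mod_cast Int.lt_add_one_iff.mp (by omega : m < 0 + 1)
    nlinarith
  rcases eq_or_lt_of_le hn1 with hc1 | hc1
  · have := R.reflect β hβ γ hγ
    have hco : 2 * ⟪β, γ⟫ / ⟪γ, γ⟫ = 1 := by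
      rw [hn, ← hc1]; push_cast; field_simp
    rwa [hco, one_smul] at this
  · rcases eq_or_lt_of_le hm1 with hc2 | hc2
    · have := R.reflect γ hγ β hβ
      have hco : 2 * ⟪γ, β⟫ / ⟪β, β⟫ = 1 := by
        rw [hm, ← hc2]; push_cast; field_simp
      rw [hco, one_smul] at this
      have := R.neg_mem _ this
      rwa [neg_sub] at this
    · -- n ≥ 2, m ≥ 2 : contradiction via Cauchy–Schwarz
      exfalso
      have hcs : ⟪β, γ⟫ * ⟪β, γ⟫ ≤ ⟪β, β⟫ * ⟪γ, γ⟫ := real_inner_mul_inner_self_le β γ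
      have hn2 : (2:ℝ) ≤ (n:ℝ) := by exact_mod_cast hc1
      have hm2 : (2:ℝ) ≤ (m:ℝ) := by exact_mod_cast hc2
      have hkey : 4 * (⟪β, γ⟫ * ⟪β, γ⟫) = (n:ℝ) * (m:ℝ) * (⟪β, β⟫ * ⟪γ, γ⟫) := by
        nlinarith [hn, hm, hcomm]
      have h4 : (n:ℝ) * (m:ℝ) * (⟪β, β⟫ * ⟪γ, γ⟫) ≤ 4 * (⟪β, β⟫ * ⟪γ, γ⟫) := by
        rw [← hkey]; nlinarith [hcs]
      have hnm4 : (n:ℝ) * (m:ℝ) ≤ 4 :=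
        (mul_le_mul_iff_of_pos_right (mul_pos hββ hγγ)).mp h4
      have hge : (4:ℝ) ≤ (n:ℝ) * (m:ℝ) := by nlinarith [hn2, hm2]
      have h4' : (n:ℝ) * (m:ℝ) = 4 := le_antisymm hnm4 hge
      have hZ : n * m = 4 := by exact_mod_cast h4'
      have hn2' : n = 2 := by nlinarith [hc1, hc2, hZ]
      have hm2' : m = 2 := by nlinarith [hc1, hc2, hZ]
      subst hn2' hm2'
      push_cast at hn hm
      have heq1 : ⟪β, γ⟫ = ⟪γ, γ⟫ := by linarith
      have heq2 : ⟪β, γ⟫ = ⟪β, β⟫ := by linarith [hcomm]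
      have hzero : ⟪β - γ, β - γ⟫ = (0:ℝ) := by
        rw [real_inner_sub_sub_self]
        linarith
      exact hne (sub_eq_zero.mp (inner_self_eq_zero.mp hzero))

lemma add_mem_of_inner_neg (R : CrystRS E) {β γ : E} (hβ : β ∈ R.roots)
    (hγ : γ ∈ R.roots) (hne : β ≠ -γ) (hneg : ⟪β, γ⟫ < 0) : β + γ ∈ R.roots := by
  have hγ' : -γ ∈ R.roots := R.neg_mem γ hγ
  have hpos : 0 < ⟪β, -γ⟫ := by rw [inner_neg_right]; linarith
  have := R.sub_mem_of_inner_pos hβ hγ' hne hpos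
  rwa [sub_neg_eq_add] at this

/-- Key contradiction: the two sums containing `x` cannot both fail. -/
lemma key (R : CrystRS E) {x y z : E} (hx : x ∈ R.roots) (hy : y ∈ R.roots)
    (hz : z ∈ R.roots) (hsum : x + y + z ∈ R.roots)
    (hxy : x ≠ -y) (hxz : x ≠ -z) (hyz : y ≠ -z)
    (h1 : x + y ∉ R.roots) (h2 : x + z ∉ R.roots) : False := by
  have hxy0 : 0 ≤ ⟪x, y⟫ := by
    by_contra hcon
    push_neg at hcon
    exact h1 (R.add_mem_of_inner_neg hx hy hxy hcon)
  have hxz0 : 0 ≤ ⟪x, z⟫ := by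
    by_contra hcon
    push_neg at hcon
    exact h2 (R.add_mem_of_inner_neg hx hz hxz hcon)
  have hxx : (0:ℝ) < ⟪x, x⟫ := inner_self_pos' (R.nonzero x hx)
  have hyy : (0:ℝ) < ⟪y, y⟫ := inner_self_pos' (R.nonzero y hy)
  have hzz : (0:ℝ) < ⟪z, z⟫ := inner_self_pos' (R.nonzero z hz)
  set δ := x + y + z with hδ
  have hδx : 0 < ⟪δ, x⟫ := by
    simp only [hδ, inner_add_left]
    nlinarith [real_inner_comm y x, real_inner_comm z x]
  have hδnex : δ ≠ x := by
    intro h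
    apply hyz
    have h' : x + (y + z) = x + 0 := by
      rw [add_zero, ← add_assoc]; exact h
    exact eq_neg_of_add_eq_zero_left (add_left_cancel h')
  have hρ : y + z ∈ R.roots := by
    have := R.sub_mem_of_inner_pos hsum hx hδnex hδx
    have he : δ - x = y + z := by rw [hδ]; abel
    rwa [he] at this
  have hδy : ⟪δ, y⟫ ≤ 0 := by
    by_contra hcon
    push_neg at hcon
    have hne : δ ≠ y := by
      intro hh
      apply hxz
      have h' : x + z + y = 0 + y := by
        rw [zero_add, show x + z + y = x + y + z by abel]; exact hh
      exact eq_neg_of_add_eq_zero_left (add_right_cancel h')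
    have := R.sub_mem_of_inner_pos hsum hy hne hcon
    have he : δ - y = x + z := by rw [hδ]; abel
    rw [he] at this
    exact h2 this
  have hδz : ⟪δ, z⟫ ≤ 0 := by
    by_contra hcon
    push_neg at hcon
    have hne : δ ≠ z := by
      intro hh
      apply hxy
      have h' : x + y + z = 0 + z := by rw [zero_add]; exact hh
      exact eq_neg_of_add_eq_zero_left (add_right_cancel h')
    have := R.sub_mem_of_inner_pos hsum hz hne hcon
    have he : δ - z = x + y := by rw [hδ]; abel
    rw [he] at this
    exact h1 this
  have hρρ : (0:ℝ) < ⟪y + z, y + z⟫ := inner_self_pos' (R.nonzero _ hρ)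
  simp only [hδ, inner_add_left, inner_add_right] at hδy hδz hρρ
  nlinarith [real_inner_comm x y, real_inner_comm x z, real_inner_comm y z]

end CrystRS

theorem statement0 {E : Type} [NormedAddCommGroup E] [InnerProductSpace ℝ E] (R : CrystRS E) (β₁ β₂ β₃ : E)
    (h1 : β₁ ∈ R.roots) (h2 : β₂ ∈ R.roots) (h3 : β₃ ∈ R.roots)
    (hsum : β₁ + β₂ + β₃ ∈ R.roots)
    (h12 : β₁ ≠ -β₂) (h13 : β₁ ≠ -β₃) (h23 : β₂ ≠ -β₃) :
    (β₁ + β₂ ∈ R.roots ∧ β₁ + β₃ ∈ R.roots) ∨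
    (β₁ + β₂ ∈ R.roots ∧ β₂ + β₃ ∈ R.roots) ∨
    (β₁ + β₃ ∈ R.roots ∧ β₂ + β₃ ∈ R.roots) := by
  by_contra h
  push_neg at h
  obtain ⟨hA, hB, hC⟩ := h
  have h31 : β₃ ≠ -β₁ := fun hh => h13 (by rw [hh]; abel)
  have h21 : β₂ ≠ -β₁ := fun hh => h12 (by rw [hh]; abel)
  have h32 : β₃ ≠ -β₂ := fun hh => h23 (by rw [hh]; abel)
  by_cases a : β₁ + β₂ ∈ R.roots
  · have b : β₁ + β₃ ∉ R.roots := hA a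
    have c : β₂ + β₃ ∉ R.roots := hB a
    have hsum' : β₃ + β₁ + β₂ ∈ R.roots := by
      rwa [show β₃ + β₁ + β₂ = β₁ + β₂ + β₃ by abel]
    exact R.key h3 h1 h2 hsum' h31 h32 h12
      (by rwa [show β₃ + β₁ = β₁ + β₃ by abel]) (by rwa [show β₃ + β₂ = β₂ + β₃ by abel])
  · by_cases b : β₁ + β₃ ∈ R.roots
    · have c : β₂ + β₃ ∉ R.roots := hC b
      have hsum' : β₂ + β₁ + β₃ ∈ R.roots := by
        rwa [show β₂ + β₁ + β₃ = β₁ + β₂ + β₃ by abel]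
      exact R.key h2 h1 h3 hsum' h21 h23 h13
        (by rwa [show β₂ + β₁ = β₁ + β₂ by abel]) c
    · exact R.key h1 h2 h3 hsum h12 h13 h23 a b
end

section
/- Let I be an abelian ideal of a positive system Φ⁺ of a finite irreducible crystallographic root system Φ. If β, γ ∈ I and β - γ ∈ Φ, then (β, γ) > 0. -/
local notation "⟪" x ", " y "⟫" => @inner ℝ _ _ x y

theorem statement5 {E : Type} [NormedAddCommGroup E] [InnerProductSpace ℝ E] (R : BasedRS E) (hirr : R.toCrystRS.Irred)
    (I : Set E) (hI : R.IsAbelianIdeal I)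
    (β γ : E) (hβ : β ∈ I) (hγ : γ ∈ I) (hd : β - γ ∈ R.roots) :
    0 < ⟪β, γ⟫ := by
  obtain ⟨hsub, hup, hA⟩ := hI
  have hβr : β ∈ R.roots := (hsub hβ).1
  have hγr : γ ∈ R.roots := (hsub hγ).1
  have hγγ : (0:ℝ) < ⟪γ, γ⟫ :=
    lt_of_le_of_ne real_inner_self_nonneg
      (fun h => R.nonzero γ hγr ((inner_self_eq_zero (𝕜 := ℝ)).1 h.symm))
  have hββ : (0:ℝ) < ⟪β, β⟫ :=
    lt_of_le_of_ne real_inner_self_nonneg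
      (fun h => R.nonzero β hβr ((inner_self_eq_zero (𝕜 := ℝ)).1 h.symm))
  by_contra hcon
  push_neg at hcon
  obtain ⟨m, hm⟩ := R.cartan β hβr γ hγr
  obtain ⟨m', hm'⟩ := R.cartan γ hγr β hβr
  have hsym : ⟪γ, β⟫ = ⟪β, γ⟫ := real_inner_comm β γ
  rw [hsym] at hm'
  have hmle : (m:ℝ) ≤ 0 := by nlinarith
  have hm'le : (m':ℝ) ≤ 0 := by nlinarith
  rcases eq_or_lt_of_le hmle with hm0 | hmneg
  · -- m = 0, so ⟪β,γ⟫ = 0; reflect β - γ in γ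
    have h0 : ⟪β, γ⟫ = 0 := by nlinarith
    have href := R.reflect (β - γ) hd γ hγr
    have hc : 2 * ⟪β - γ, γ⟫ / ⟪γ, γ⟫ = -2 := by
      rw [inner_sub_left, h0]
      field_simp
      ring
    rw [hc] at href
    have heq : β - γ - (-2 : ℝ) • γ = β + γ := by
      rw [neg_smul, sub_neg_eq_add]
      module
    rw [heq] at href
    exact hA β hβ γ hγ href
  · have hm1 : m ≤ -1 := by
      have : m < 0 := by exact_mod_cast hmneg
      omega
    have hβγneg : ⟪β, γ⟫ < 0 := by
      have : (m:ℝ) ≤ -1 := by exact_mod_cast hm1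
      nlinarith
    have hm'1 : m' ≤ -1 := by
      have h : (m':ℝ) < 0 := by nlinarith
      have : m' < 0 := by exact_mod_cast h
      omega
    rcases eq_or_lt_of_le hm1 with hmm | hmm
    · -- m = -1 : reflect β in γ gives β + γ
      have href := R.reflect β hβr γ hγr
      have hc : 2 * ⟪β, γ⟫ / ⟪γ, γ⟫ = -1 := by
        rw [hm, hmm]
        push_cast
        field_simp
      rw [hc] at href
      have heq : β - (-1 : ℝ) • γ = β + γ := by
        rw [neg_smul, sub_neg_eq_add, one_smul]
      rw [heq] at href
      exact hA β hβ γ hγ href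
    rcases eq_or_lt_of_le hm'1 with hmm' | hmm'
    · -- m' = -1 : reflect γ in β gives γ + β
      have href := R.reflect γ hγr β hβr
      have hc : 2 * ⟪γ, β⟫ / ⟪β, β⟫ = -1 := by
        rw [hsym, hm', hmm']
        push_cast
        field_simp
      rw [hc] at href
      have heq : γ - (-1 : ℝ) • β = β + γ := by
        rw [neg_smul, sub_neg_eq_add, one_smul, add_comm]
      rw [heq] at href
      exact hA β hβ γ hγ href
    · -- m ≤ -2 and m' ≤ -2 : forces γ = -β
      have h2 : (m:ℝ) ≤ -2 := by exact_mod_cast (by omega : m ≤ -2)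
      have h2' : (m':ℝ) ≤ -2 := by exact_mod_cast (by omega : m' ≤ -2)
      have hzero : β + γ = 0 := by
        rw [← inner_self_eq_zero (𝕜 := ℝ)]
        have hexp : ⟪β + γ, β + γ⟫ = ⟪β, β⟫ + 2 * ⟪β, γ⟫ + ⟪γ, γ⟫ :=
          real_inner_add_add_self β γ
      -- 2⟪β,γ⟫ = m⟪γ,γ⟫ ≤ -2⟪γ,γ⟫ and 2⟪β,γ⟫ = m'⟪β,β⟫ ≤ -2⟪β,β⟫
        have hle : ⟪β + γ, β + γ⟫ ≤ 0 := by rw [hexp]; nlinarith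
        have hge : (0:ℝ) ≤ ⟪β + γ, β + γ⟫ := real_inner_self_nonneg
        linarith
      have hγβ : γ = -β := by
        have := eq_neg_of_add_eq_zero_right hzero
        exact this
      have hsum : β + β = β - γ := by rw [hγβ, sub_neg_eq_add]
      exact hA β hβ β hβ (hsum ▸ hd)
end

section
/- Let I be an abelian ideal of Φ⁺, and let β₁, β₂, γ₁, γ₂ ∈ I with β₁ ≠ β₂, β₁ + β₂ = γ₁ + γ₂, and βᵢ ≠ γⱼ for all i, j. Then (βᵢ, γⱼ) > 0 for all i, j ∈ {1,2}; in particular, βᵢ - γⱼ is a root for all i, j. -/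
local notation "⟪" x ", " y "⟫" => @inner ℝ _ _ x y

section Aux

variable {E : Type} [NormedAddCommGroup E] [InnerProductSpace ℝ E]

lemma aux_self_inner_pos {b : E} (hb : b ≠ 0) : 0 < ⟪b, b⟫ := by
  rw [real_inner_self_eq_norm_mul_norm]
  have : 0 < ‖b‖ := norm_pos_iff.mpr hb
  exact mul_pos this this

lemma aux_inner_self_pos (R : CrystRS E) {b : E} (hb : b ∈ R.roots) : 0 < ⟪b, b⟫ :=
  aux_self_inner_pos (R.nonzero b hb)

/-- If two roots have positive inner product and are distinct, their difference is a root. -/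
lemma aux_sub_mem (R : CrystRS E) {b g : E} (hb : b ∈ R.roots) (hg : g ∈ R.roots)
    (hpos : 0 < ⟪b, g⟫) (hne : b ≠ g) : b - g ∈ R.roots := by
  obtain ⟨n, hn⟩ := R.cartan b hb g hg
  obtain ⟨m, hm⟩ := R.cartan g hg b hb
  have hp : 0 < ⟪b, b⟫ := aux_inner_self_pos R hb
  have hq : 0 < ⟪g, g⟫ := aux_inner_self_pos R hg
  have hgb : ⟪g, b⟫ = ⟪b, g⟫ := real_inner_comm b g
  have hnpos : 0 < n := by
    have h1 : 0 < (n : ℝ) * ⟪g, g⟫ := by rw [← hn]; linarith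
    have h2 : 0 < (n : ℝ) := by nlinarith
    exact_mod_cast h2
  have hmpos : 0 < m := by
    have h1 : 0 < (m : ℝ) * ⟪b, b⟫ := by rw [← hm, hgb]; linarith
    have h2 : 0 < (m : ℝ) := by nlinarith
    exact_mod_cast h2
  by_cases hn1 : n = 1
  · have hcoef : 2 * ⟪b, g⟫ / ⟪g, g⟫ = 1 := by
      rw [hn, hn1]; push_cast; field_simp
    have := R.reflect b hb g hg
    rwa [hcoef, one_smul] at this
  by_cases hm1 : m = 1
  · have hcoef : 2 * ⟪g, b⟫ / ⟪b, b⟫ = 1 := by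
      rw [hm, hm1]; push_cast; field_simp
    have h := R.reflect g hg b hb
    rw [hcoef, one_smul] at h
    have := R.neg_mem _ h
    rwa [neg_sub] at this
  · exfalso
    have hn2 : (2 : ℝ) ≤ (n : ℝ) := by exact_mod_cast (by omega : (2:ℤ) ≤ n)
    have hm2 : (2 : ℝ) ≤ (m : ℝ) := by exact_mod_cast (by omega : (2:ℤ) ≤ m)
    have hcs : ⟪b, g⟫ * ⟪b, g⟫ ≤ ⟪b, b⟫ * ⟪g, g⟫ := real_inner_mul_inner_self_le b g
    -- 4⟪b,g⟫² = n*m*⟪b,b⟫*⟪g,g⟫ ≥ 4⟪b,b⟫⟪g,g⟫, hence equality throughout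
    have hid : 4 * (⟪b, g⟫ * ⟪b, g⟫) = (n : ℝ) * (m : ℝ) * (⟪b, b⟫ * ⟪g, g⟫) := by
      nlinarith [hn, hm, hgb]
    have hnm4 : (4 : ℝ) ≤ (n : ℝ) * (m : ℝ) := by nlinarith
    have hge : ⟪b, b⟫ * ⟪g, g⟫ ≤ ⟪b, g⟫ * ⟪b, g⟫ := by
      nlinarith [hid, mul_nonneg (by linarith : (0:ℝ) ≤ (n : ℝ) * (m : ℝ) - 4)
        (le_of_lt (mul_pos hp hq))]
    have heq : ⟪b, g⟫ * ⟪b, g⟫ = ⟪b, b⟫ * ⟪g, g⟫ := le_antisymm hcs hge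
    have hid2 : (4 : ℝ) * (⟪b, b⟫ * ⟪g, g⟫) = ((n : ℝ) * (m : ℝ)) * (⟪b, b⟫ * ⟪g, g⟫) := by
      rw [heq] at hid; exact hid
    have hnm : (4 : ℝ) = (n : ℝ) * (m : ℝ) :=
      mul_right_cancel₀ (mul_pos hp hq).ne' hid2
    have hnmZ : n * m = 4 := by exact_mod_cast hnm.symm
    have hnZ : (2 : ℤ) ≤ n := by omega
    have hmZ : (2 : ℤ) ≤ m := by omega
    have hnle : n ≤ 2 := by nlinarith
    have hmle : m ≤ 2 := by nlinarith
    have hn2' : n = 2 := le_antisymm hnle hnZ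
    have hm2' : m = 2 := le_antisymm hmle hmZ
    rw [hn2'] at hn
    rw [hm2'] at hm
    push_cast at hn hm
    have hbgq : ⟪b, g⟫ = ⟪g, g⟫ := by linarith
    have hbgp : ⟪b, g⟫ = ⟪b, b⟫ := by linarith [hgb]
    have hnorm : ‖b‖ = ‖g‖ := by
      have h1 : ‖b‖ * ‖b‖ = ‖g‖ * ‖g‖ := by
        rw [← real_inner_self_eq_norm_mul_norm, ← real_inner_self_eq_norm_mul_norm,
          ← hbgp, ← hbgq]
      nlinarith [norm_nonneg b, norm_nonneg g, norm_pos_iff.mpr (R.nonzero b hb)]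
    have hinner : ⟪b, g⟫ = ‖b‖ * ‖g‖ := by
      rw [hbgp, real_inner_self_eq_norm_mul_norm, hnorm]
    have hdep := inner_eq_norm_mul_iff_real.mp hinner
    rw [hnorm] at hdep
    have hg0 : ‖g‖ ≠ 0 := norm_ne_zero_iff.mpr (R.nonzero g hg)
    exact hne (smul_right_injective E hg0 hdep)

/-- If two roots have negative inner product and are not antipodal, their sum is a root. -/
lemma aux_add_mem (R : CrystRS E) {b g : E} (hb : b ∈ R.roots) (hg : g ∈ R.roots)
    (hneg : ⟪b, g⟫ < 0) (hne : b ≠ -g) : b + g ∈ R.roots := by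
  have h := aux_sub_mem R hb (R.neg_mem g hg) (by rw [inner_neg_right]; linarith) hne
  rwa [sub_neg_eq_add] at h

/-- Representation of closure membership with natural coefficients. -/
lemma aux_exists_coeff (s : Finset E) {x : E} (hx : x ∈ AddSubmonoid.closure (s : Set E)) :
    ∃ c : E → ℕ, x = ∑ a ∈ s, c a • a := by
  classical
  refine AddSubmonoid.closure_induction ?_ ⟨0, by simp⟩ ?_ hx
  · intro a ha
    refine ⟨fun b => if b = a then 1 else 0, ?_⟩
    rw [Finset.sum_eq_single a (fun b _ hba => by simp [hba])
      (fun h => absurd (Finset.mem_coe.mp ha) h)]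
    simp
  · rintro x y _ _ ⟨c, hc⟩ ⟨d, hd⟩
    exact ⟨fun a => c a + d a, by simp [hc, hd, add_smul, Finset.sum_add_distrib]⟩

/-- The positive cone is pointed. -/
lemma aux_pointed (R : BasedRS E) {x : E}
    (hx : x ∈ AddSubmonoid.closure (R.simple : Set E))
    (hx' : -x ∈ AddSubmonoid.closure (R.simple : Set E)) : x = 0 := by
  obtain ⟨c, hc⟩ := aux_exists_coeff R.simple hx
  obtain ⟨d, hd⟩ := aux_exists_coeff R.simple hx'
  have hsum : ∑ a ∈ R.simple, ((c a : ℝ) + (d a : ℝ)) • a = 0 := by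
    have h0 : (∑ a ∈ R.simple, c a • a) + (∑ a ∈ R.simple, d a • a) = 0 := by
      rw [← hc, ← hd]; abel
    rw [← h0, ← Finset.sum_add_distrib]
    refine Finset.sum_congr rfl fun a _ => ?_
    rw [add_smul, Nat.cast_smul_eq_nsmul, Nat.cast_smul_eq_nsmul]
  have key : ∑ i ∈ R.simple.attach, ((c (i : E) : ℝ) + (d (i : E) : ℝ)) • (i : E) = 0 := by
    rw [Finset.sum_attach R.simple (fun a => ((c a : ℝ) + (d a : ℝ)) • a)]
    exact hsum
  have hzero := linearIndependent_iff'.mp R.simple_indep R.simple.attach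
    (fun i => (c (i : E) : ℝ) + (d (i : E) : ℝ)) key
  rw [hc]
  refine Finset.sum_eq_zero fun a ha => ?_
  have h3 : (c a : ℝ) + (d a : ℝ) = 0 := hzero ⟨a, ha⟩ (Finset.mem_attach _ _)
  have hca : c a = 0 := by
    have h1 : (0 : ℝ) ≤ (c a : ℝ) := Nat.cast_nonneg _
    have h2 : (0 : ℝ) ≤ (d a : ℝ) := Nat.cast_nonneg _
    have h4 : (c a : ℝ) = 0 := by linarith
    exact_mod_cast h4
  simp [hca]

/-- Inner products between elements of an abelian ideal are nonnegative. -/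
lemma aux_nonneg (R : BasedRS E) {I : Set E} (hI : R.IsAbelianIdeal I)
    {x y : E} (hx : x ∈ I) (hy : y ∈ I) : 0 ≤ ⟪x, y⟫ := by
  have hsub := hI.1
  have hab := hI.2.2
  have hxr : x ∈ R.roots := (hsub hx).1
  have hyr : y ∈ R.roots := (hsub hy).1
  by_contra h
  push_neg at h
  have hne : x ≠ -y := by
    intro hxy
    have h1 : y ∈ AddSubmonoid.closure (R.simple : Set E) := (hsub hy).2
    have h2 : -y ∈ AddSubmonoid.closure (R.simple : Set E) := hxy ▸ (hsub hx).2
    exact R.nonzero y hyr (aux_pointed R h1 h2)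
  exact hab x hx y hy (aux_add_mem R.toCrystRS hxr hyr h hne)

/-- The key positivity lemma. -/
lemma aux_key_pos (R : BasedRS E) {I : Set E} (hI : R.IsAbelianIdeal I)
    {b1 b2 g1 g2 : E} (hb1 : b1 ∈ I) (hb2 : b2 ∈ I) (hg1 : g1 ∈ I) (hg2 : g2 ∈ I)
    (hsum : b1 + b2 = g1 + g2) (h12 : b1 ≠ g2) (h22 : b2 ≠ g2) : 0 < ⟪b1, g1⟫ := by
  have hsub := hI.1
  have hab := hI.2.2
  have hb1r : b1 ∈ R.roots := (hsub hb1).1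
  have hb2r : b2 ∈ R.roots := (hsub hb2).1
  have hg1r : g1 ∈ R.roots := (hsub hg1).1
  have hg2r : g2 ∈ R.roots := (hsub hg2).1
  have h11n : 0 ≤ ⟪b1, g1⟫ := aux_nonneg R hI hb1 hg1
  rcases h11n.lt_or_eq with h | h0
  · exact h
  exfalso
  have h0 : ⟪b1, g1⟫ = 0 := h0.symm
  have hbb : 0 ≤ ⟪b1, b2⟫ := aux_nonneg R hI hb1 hb2
  have hgg : 0 ≤ ⟪g1, g2⟫ := aux_nonneg R hI hg1 hg2
  have hδ : b1 - g2 = g1 - b2 := by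
    rw [sub_eq_sub_iff_add_eq_add]; exact hsum
  have hδ0 : 0 < ⟪b1 - g2, b1 - g2⟫ := aux_self_inner_pos (sub_ne_zero.mpr h12)
  have hexp : ⟪b1 - g2, g1 - b2⟫ = ⟪b1, g1⟫ - ⟪b1, b2⟫ - ⟪g1, g2⟫ + ⟪b2, g2⟫ := by
    simp only [inner_sub_left, inner_sub_right]
    rw [real_inner_comm g2 g1, real_inner_comm g2 b2]
    ring
  have h22pos : 0 < ⟪b2, g2⟫ := by
    have hδ0' : 0 < ⟪b1 - g2, g1 - b2⟫ := by
      rw [← hδ]; exact hδ0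
    rw [hexp, h0] at hδ0'
    linarith
  have hε : b2 - g2 ∈ R.roots := aux_sub_mem R.toCrystRS hb2r hg2r h22pos h22
  have hεeq : b2 - g2 = g1 - b1 := by
    rw [sub_eq_sub_iff_add_eq_add, add_comm b2 b1]; exact hsum
  rw [hεeq] at hε
  have hp1 : 0 < ⟪b1, b1⟫ := aux_inner_self_pos R.toCrystRS hb1r
  have hcoef : 2 * ⟪g1 - b1, b1⟫ / ⟪b1, b1⟫ = -2 := by
    rw [inner_sub_left, real_inner_comm b1 g1, h0]
    field_simp
    ring
  have href := R.reflect _ hε b1 hb1r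
  rw [hcoef] at href
  have heq2 : g1 - b1 - (-2 : ℝ) • b1 = g1 + b1 := by
    rw [neg_smul, sub_neg_eq_add, two_smul]; abel
  rw [heq2] at href
  exact hab g1 hg1 b1 hb1 href

end Aux

theorem statement6 {E : Type} [NormedAddCommGroup E] [InnerProductSpace ℝ E] (R : BasedRS E) (hirr : R.toCrystRS.Irred)
    (I : Set E) (hI : R.IsAbelianIdeal I)
    (β₁ β₂ γ₁ γ₂ : E)
    (hb1 : β₁ ∈ I) (hb2 : β₂ ∈ I) (hg1 : γ₁ ∈ I) (hg2 : γ₂ ∈ I)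
    (hne : β₁ ≠ β₂) (hsum : β₁ + β₂ = γ₁ + γ₂)
    (h11 : β₁ ≠ γ₁) (h12 : β₁ ≠ γ₂) (h21 : β₂ ≠ γ₁) (h22 : β₂ ≠ γ₂) :
    (0 < ⟪β₁, γ₁⟫ ∧ 0 < ⟪β₁, γ₂⟫ ∧ 0 < ⟪β₂, γ₁⟫ ∧ 0 < ⟪β₂, γ₂⟫) ∧
    (β₁ - γ₁ ∈ R.roots ∧ β₁ - γ₂ ∈ R.roots ∧ β₂ - γ₁ ∈ R.roots ∧ β₂ - γ₂ ∈ R.roots) := by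
  have hsub := hI.1
  have hb1r : β₁ ∈ R.roots := (hsub hb1).1
  have hb2r : β₂ ∈ R.roots := (hsub hb2).1
  have hg1r : γ₁ ∈ R.roots := (hsub hg1).1
  have hg2r : γ₂ ∈ R.roots := (hsub hg2).1
  have hp11 : 0 < ⟪β₁, γ₁⟫ := aux_key_pos R hI hb1 hb2 hg1 hg2 hsum h12 h22
  have hp12 : 0 < ⟪β₁, γ₂⟫ := aux_key_pos R hI hb1 hb2 hg2 hg1
    (by rw [add_comm γ₂ γ₁]; exact hsum) h11 h21
  have hp21 : 0 < ⟪β₂, γ₁⟫ := aux_key_pos R hI hb2 hb1 hg1 hg2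
    (by rw [add_comm β₂ β₁]; exact hsum) h22 h12
  have hp22 : 0 < ⟪β₂, γ₂⟫ := aux_key_pos R hI hb2 hb1 hg2 hg1
    (by rw [add_comm β₂ β₁, add_comm γ₂ γ₁]; exact hsum) h21 h11
  exact ⟨⟨hp11, hp12, hp21, hp22⟩,
    aux_sub_mem R.toCrystRS hb1r hg1r hp11 h11,
    aux_sub_mem R.toCrystRS hb1r hg2r hp12 h12,
    aux_sub_mem R.toCrystRS hb2r hg1r hp21 h21,
    aux_sub_mem R.toCrystRS hb2r hg2r hp22 h22⟩
end

section
/- Let I be an abelian ideal of Φ⁺, and let {β₁, β₂}, {γ₁, γ₂} be crossing pairs contained in I with β₁ ≠ β₂. Then either β₁ < γ₁, γ₂ < β₂ (after possibly swapping β₁, β₂), or γ₁ < β₁, β₂ < γ₂ (after possibly swapping γ₁, γ₂); that is, one of the two pairs consists of the minimum and the maximum of {β₁, β₂, γ₁, γ₂} with respect to the standard partial order on roots. -/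
local notation "⟪" x ", " y "⟫" => @inner ℝ _ _ x y

section Aux

variable {E : Type} [NormedAddCommGroup E] [InnerProductSpace ℝ E] (R : BasedRS E)

lemma inner_self_pos' {x : E} (hx : x ≠ 0) : (0:ℝ) < ⟪x, x⟫ := by
  rw [real_inner_self_eq_norm_mul_norm]
  exact mul_pos (norm_pos_iff.2 hx) (norm_pos_iff.2 hx)

/-- If two roots have positive inner product and are distinct, their difference is a root. -/
lemma sub_mem_of_inner_pos {β γ : E} (hβ : β ∈ R.roots) (hγ : γ ∈ R.roots)
    (hne : β ≠ γ) (hpos : 0 < ⟪β, γ⟫) : β - γ ∈ R.roots := by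
  obtain ⟨n, hn⟩ := R.cartan β hβ γ hγ
  obtain ⟨m, hm⟩ := R.cartan γ hγ β hβ
  have hββ : (0:ℝ) < ⟪β, β⟫ := inner_self_pos' (R.nonzero β hβ)
  have hγγ : (0:ℝ) < ⟪γ, γ⟫ := inner_self_pos' (R.nonzero γ hγ)
  have hsymm : ⟪γ, β⟫ = ⟪β, γ⟫ := real_inner_comm β γ
  have hn1 : 1 ≤ n := by
    by_contra h
    push_neg at h
    have h' : (n:ℝ) ≤ 0 := by exact_mod_cast (by omega : n ≤ 0)
    nlinarith
  have hm1 : 1 ≤ m := by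
    by_contra h
    push_neg at h
    have h' : (m:ℝ) ≤ 0 := by exact_mod_cast (by omega : m ≤ 0)
    nlinarith
  rcases eq_or_lt_of_le hn1 with h1 | h1
  · have hr := R.reflect β hβ γ hγ
    have hc : 2 * ⟪β, γ⟫ / ⟪γ, γ⟫ = 1 := by
      rw [hn, ← h1]
      push_cast
      field_simp
    rw [hc, one_smul] at hr
    exact hr
  rcases eq_or_lt_of_le hm1 with h2 | h2
  · have hr := R.reflect γ hγ β hβ
    have hc : 2 * ⟪γ, β⟫ / ⟪β, β⟫ = 1 := by
      rw [hm, ← h2]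
      push_cast
      field_simp
    rw [hc, one_smul] at hr
    have := R.neg_mem _ hr
    simpa using this
  · exfalso
    have hn2 : (2:ℝ) ≤ (n:ℝ) := by exact_mod_cast (by omega : (2:ℤ) ≤ n)
    have hm2 : (2:ℝ) ≤ (m:ℝ) := by exact_mod_cast (by omega : (2:ℤ) ≤ m)
    have hexp : ⟪β - γ, β - γ⟫ = ⟪β, β⟫ - 2 * ⟪β, γ⟫ + ⟪γ, γ⟫ := by
      rw [inner_sub_left, inner_sub_right, inner_sub_right, real_inner_comm β γ]
      ring
    have hpos' : (0:ℝ) < ⟪β - γ, β - γ⟫ := inner_self_pos' (sub_ne_zero.2 hne)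
    nlinarith
  
/-- If two roots have negative inner product and are not opposite, their sum is a root. -/
lemma add_mem_of_inner_neg {β γ : E} (hβ : β ∈ R.roots) (hγ : γ ∈ R.roots)
    (hne : β ≠ -γ) (hneg : ⟪β, γ⟫ < 0) : β + γ ∈ R.roots := by
  have h := sub_mem_of_inner_pos R hβ (R.neg_mem γ hγ) hne
    (by rw [inner_neg_right]; linarith)
  rw [sub_neg_eq_add] at h
  exact h

/-- There is a linear functional taking value 1 on each simple root. -/
lemma exists_functional : ∃ f : E →ₗ[ℝ] ℝ, ∀ α ∈ R.simple, f α = 1 := by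
  have hli : LinearIndepOn ℝ id (↑R.simple : Set E) := R.simple_indep
  refine ⟨(Module.Basis.extend hli).sumCoords, fun α hα => ?_⟩
  have hmem : α ∈ hli.extend (Set.subset_univ _) :=
    hli.subset_extend (Set.subset_univ _) (by simpa using hα)
  have : (Module.Basis.extend hli) ⟨α, hmem⟩ = α := Module.Basis.extend_apply_self hli ⟨α, hmem⟩
  rw [← this]
  exact Module.Basis.sumCoords_self_apply _ _

lemma one_le_functional {f : E →ₗ[ℝ] ℝ} (hf : ∀ α ∈ R.simple, f α = 1)
    {x : E} (hx : x ∈ AddSubmonoid.closure (R.simple : Set E)) : x = 0 ∨ 1 ≤ f x := by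
  induction hx using AddSubmonoid.closure_induction with
  | mem α hα => exact Or.inr (le_of_eq (hf α (by simpa using hα)).symm)
  | zero => exact Or.inl rfl
  | add x y hx hy ihx ihy =>
    rcases ihx with rfl | ihx
    · simpa using ihy
    rcases ihy with rfl | ihy
    · simpa using Or.inr ihx
    · right
      rw [map_add]
      linarith

/-- Two elements of an abelian ideal have nonnegative inner product. -/
lemma inner_nonneg_of_abelian {I : Set E} (hI : R.IsAbelianIdeal I)
    {β γ : E} (hβ : β ∈ I) (hγ : γ ∈ I) : 0 ≤ ⟪β, γ⟫ := by
  obtain ⟨f, hf⟩ := exists_functional R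
  by_contra h
  push_neg at h
  have hβp := hI.1 hβ
  have hγp := hI.1 hγ
  have hβ1 : 1 ≤ f β := (one_le_functional R hf hβp.2).resolve_left (R.nonzero β hβp.1)
  have hγ1 : 1 ≤ f γ := (one_le_functional R hf hγp.2).resolve_left (R.nonzero γ hγp.1)
  have hne : β ≠ -γ := by
    intro hc
    rw [hc, map_neg] at hβ1
    linarith
  exact hI.2.2 β hβ γ hγ (add_mem_of_inner_neg R hβp.1 hγp.1 hne h)

lemma le_of_mem {x y : E} (h : y - x ∈ AddSubmonoid.closure (R.simple : Set E)) :
    R.le x y := h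

end Aux

theorem statement7 {E : Type} [NormedAddCommGroup E] [InnerProductSpace ℝ E] (R : BasedRS E) (hirr : R.toCrystRS.Irred)
    (I : Set E) (hI : R.IsAbelianIdeal I)
    (β₁ β₂ γ₁ γ₂ : E)
    (hb1 : β₁ ∈ I) (hb2 : β₂ ∈ I) (hg1 : γ₁ ∈ I) (hg2 : γ₂ ∈ I)
    (hne : β₁ ≠ β₂) (hsum : β₁ + β₂ = γ₁ + γ₂)
    (h11 : β₁ ≠ γ₁) (h12 : β₁ ≠ γ₂) (h21 : β₂ ≠ γ₁) (h22 : β₂ ≠ γ₂) :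
    (R.lt β₁ γ₁ ∧ R.lt β₁ γ₂ ∧ R.lt γ₁ β₂ ∧ R.lt γ₂ β₂) ∨
    (R.lt β₂ γ₁ ∧ R.lt β₂ γ₂ ∧ R.lt γ₁ β₁ ∧ R.lt γ₂ β₁) ∨
    (R.lt γ₁ β₁ ∧ R.lt γ₁ β₂ ∧ R.lt β₁ γ₂ ∧ R.lt β₂ γ₂) ∨
    (R.lt γ₂ β₁ ∧ R.lt γ₂ β₂ ∧ R.lt β₁ γ₁ ∧ R.lt β₂ γ₁) := by
  classical
  have hb1p := hI.1 hb1
  have hb2p := hI.1 hb2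
  have hg1p := hI.1 hg1
  have hg2p := hI.1 hg2
  have ha : 0 ≤ ⟪β₁, β₂⟫ := inner_nonneg_of_abelian R hI hb1 hb2
  have hb : 0 ≤ ⟪γ₁, γ₂⟫ := inner_nonneg_of_abelian R hI hg1 hg2
  have hq : 0 ≤ ⟪β₁, γ₂⟫ := inner_nonneg_of_abelian R hI hb1 hg2
  have hr : 0 ≤ ⟪β₂, γ₁⟫ := inner_nonneg_of_abelian R hI hb2 hg1
  have hp : 0 ≤ ⟪β₁, γ₁⟫ := inner_nonneg_of_abelian R hI hb1 hg1
  have hs : 0 ≤ ⟪β₂, γ₂⟫ := inner_nonneg_of_abelian R hI hb2 hg2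
  have hd : β₁ - γ₁ = γ₂ - β₂ := by
    rw [sub_eq_sub_iff_add_eq_add]
    exact hsum.trans (add_comm _ _)
  have he : β₂ - γ₁ = γ₂ - β₁ := by
    rw [sub_eq_sub_iff_add_eq_add, add_comm]
    exact hsum.trans (add_comm _ _)
  -- ε := β₂ - γ₁ is a root
  have hδpos : (0:ℝ) < ⟪β₁ - γ₁, γ₂ - β₂⟫ := by
    rw [← hd]
    exact inner_self_pos' (sub_ne_zero.2 h11)
  have hδexp : ⟪β₁ - γ₁, γ₂ - β₂⟫ = ⟪β₁, γ₂⟫ - ⟪β₁, β₂⟫ - ⟪γ₁, γ₂⟫ + ⟪β₂, γ₁⟫ := by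
    simp only [inner_sub_left, inner_sub_right]
    rw [real_inner_comm γ₁ β₂]
    ring
  have hεroot : β₂ - γ₁ ∈ R.roots := by
    by_cases hq' : 0 < ⟪β₁, γ₂⟫
    · have := sub_mem_of_inner_pos R hb1p.1 hg2p.1 h12 hq'
      have h2 := R.neg_mem _ this
      rw [neg_sub, ← he] at h2
      exact h2
    · have hr' : 0 < ⟪β₂, γ₁⟫ := by
        rw [hδexp] at hδpos
        push_neg at hq'
        linarith
      exact sub_mem_of_inner_pos R hb2p.1 hg1p.1 h21 hr'
  -- δ := β₁ - γ₁ is a root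
  have hεpos : (0:ℝ) < ⟪γ₂ - β₁, β₂ - γ₁⟫ := by
    rw [← he, real_inner_comm]
    exact inner_self_pos' (sub_ne_zero.2 h21)
  have hεexp : ⟪γ₂ - β₁, β₂ - γ₁⟫ = ⟪β₂, γ₂⟫ - ⟪γ₁, γ₂⟫ - ⟪β₁, β₂⟫ + ⟪β₁, γ₁⟫ := by
    simp only [inner_sub_left, inner_sub_right]
    rw [real_inner_comm β₂ γ₂, real_inner_comm γ₁ γ₂]
    ring
  have hδroot : β₁ - γ₁ ∈ R.roots := by
    by_cases hp' : 0 < ⟪β₁, γ₁⟫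
    · exact sub_mem_of_inner_pos R hb1p.1 hg1p.1 h11 hp'
    · have hs' : 0 < ⟪β₂, γ₂⟫ := by
        rw [hεexp] at hεpos
        push_neg at hp'
        linarith
      have := sub_mem_of_inner_pos R hb2p.1 hg2p.1 h22 hs'
      have h2 := R.neg_mem _ this
      rw [neg_sub] at h2
      have : γ₂ - β₂ = β₁ - γ₁ := hd.symm
      rwa [this] at h2
  rcases R.decomp _ hδroot with hδ | hδ <;> rcases R.decomp _ hεroot with hε | hε
  · -- δ pos, ε pos : γ₁ is min, γ₂ is max
    refine Or.inr (Or.inr (Or.inl ⟨⟨hδ, h11.symm⟩, ⟨hε, h21.symm⟩, ?_, ?_⟩))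
    · exact ⟨le_of_mem R (he ▸ hε), h12⟩
    · exact ⟨le_of_mem R (hd ▸ hδ), h22⟩
  · -- δ pos, ε neg : β₂ is min, β₁ is max
    rw [neg_sub] at hε
    refine Or.inr (Or.inl ⟨⟨hε, h21⟩, ?_, ⟨hδ, h11.symm⟩, ?_⟩)
    · exact ⟨le_of_mem R (hd ▸ hδ), h22⟩
    · have : β₁ - γ₂ = γ₁ - β₂ := by
        rw [sub_eq_sub_iff_add_eq_add]
        exact hsum
      exact ⟨le_of_mem R (this.symm ▸ hε), h12.symm⟩
  · -- δ neg, ε pos : β₁ is min, β₂ is max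
    rw [neg_sub] at hδ
    refine Or.inl ⟨⟨hδ, h11⟩, ?_, ⟨hε, h21.symm⟩, ?_⟩
    · exact ⟨le_of_mem R (he ▸ hε), h12⟩
    · have h3 : β₂ - γ₂ = γ₁ - β₁ := by
        rw [sub_eq_sub_iff_add_eq_add, add_comm]
        exact hsum
      exact ⟨le_of_mem R (h3.symm ▸ hδ), h22.symm⟩
  · -- δ neg, ε neg : γ₂ is min, γ₁ is max
    rw [neg_sub] at hδ hε
    have h3 : β₁ - γ₂ = γ₁ - β₂ := by
      rw [sub_eq_sub_iff_add_eq_add]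
      exact hsum
    have h4 : β₂ - γ₂ = γ₁ - β₁ := by
      rw [sub_eq_sub_iff_add_eq_add, add_comm]
      exact hsum
    exact Or.inr (Or.inr (Or.inr ⟨⟨le_of_mem R (h3.symm ▸ hε), h12.symm⟩,
      ⟨le_of_mem R (h4.symm ▸ hδ), h22.symm⟩, ⟨hδ, h11⟩, ⟨hε, h21⟩⟩))
end

section
/- Let I be an abelian ideal of Φ⁺, and let {β₁, β₂}, {γ₁, γ₂} be crossing pairs in I with β₁ ≠ β₂. If β₁ is a long root, then (β₁, β₂) = 0. -/
local notation "⟪" x ", " y "⟫" => @inner ℝ _ _ x y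

lemma aux_dual {E : Type} [NormedAddCommGroup E] [InnerProductSpace ℝ E]
    (s : Finset E) (hli : LinearIndependent ℝ (fun α : {x // x ∈ s} => (α : E))) :
    ∃ f : E →ₗ[ℝ] ℝ, ∀ α ∈ s, f α = 1 := by
  set K := Submodule.span ℝ (Set.range (fun α : {x // x ∈ s} => (α : E))) with hK
  haveI : FiniteDimensional ℝ K := FiniteDimensional.span_of_finite ℝ (Set.finite_range _)
  let b := Module.Basis.span hli
  let g : K →ₗ[ℝ] ℝ := (Finsupp.lsum ℝ (fun _ => LinearMap.id)) ∘ₗ b.repr.toLinearMap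
  refine ⟨g ∘ₗ (K.orthogonalProjectionOnto : E →L[ℝ] K).toLinearMap, fun α hα => ?_⟩
  have hαK : α ∈ K := Submodule.subset_span ⟨⟨α, hα⟩, rfl⟩
  have hproj : K.orthogonalProjectionOnto α = ⟨α, hαK⟩ := by
    ext
    exact (Submodule.starProjection_eq_self_iff.mpr hαK)
  have hb : b ⟨α, hα⟩ = ⟨α, hαK⟩ := Module.Basis.span_apply hli ⟨α, hα⟩
  simp only [LinearMap.coe_comp, Function.comp_apply, ContinuousLinearMap.coe_coe, hproj]
  rw [← hb]
  simp [g, Module.Basis.repr_self]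

lemma aux_no_neg {E : Type} [NormedAddCommGroup E] [InnerProductSpace ℝ E]
    (s : Finset E) (hli : LinearIndependent ℝ (fun α : {x // x ∈ s} => (α : E)))
    {v : E} (h : v ∈ AddSubmonoid.closure (s : Set E))
    (h' : -v ∈ AddSubmonoid.closure (s : Set E)) : v = 0 := by
  obtain ⟨f, hf⟩ := aux_dual s hli
  have key : ∀ x ∈ AddSubmonoid.closure (s : Set E), x = 0 ∨ 0 < f x := by
    intro x hx
    induction hx using AddSubmonoid.closure_induction with
    | mem y hy => exact Or.inr (by rw [hf y hy]; norm_num)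
    | zero => exact Or.inl rfl
    | add a b _ _ iha ihb =>
      rcases iha with rfl | ha
      · simpa using ihb
      rcases ihb with rfl | hb
      · simpa using Or.inr ha
      · exact Or.inr (by rw [map_add]; linarith)
  rcases key v h with rfl | hv
  · rfl
  rcases key (-v) h' with h0 | hv'
  · exact neg_eq_zero.mp h0
  · rw [map_neg] at hv'; linarith


theorem statement8 {E : Type} [NormedAddCommGroup E] [InnerProductSpace ℝ E] (R : BasedRS E) (hirr : R.toCrystRS.Irred)
    (I : Set E) (hI : R.IsAbelianIdeal I)
    (β₁ β₂ γ₁ γ₂ : E)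
    (hb1 : β₁ ∈ I) (hb2 : β₂ ∈ I) (hg1 : γ₁ ∈ I) (hg2 : γ₂ ∈ I)
    (hne : β₁ ≠ β₂) (hsum : β₁ + β₂ = γ₁ + γ₂)
    (h11 : β₁ ≠ γ₁) (h12 : β₁ ≠ γ₂) (h21 : β₂ ≠ γ₁) (h22 : β₂ ≠ γ₂)
    (hlong : R.IsLong β₁) :
    ⟪β₁, β₂⟫ = 0 := by
  obtain ⟨hIpos, hup, hab⟩ := hI
  have hb1p := hIpos hb1
  have hb2p := hIpos hb2
  have hg1p := hIpos hg1
  have hg2p := hIpos hg2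
  have rb1 : β₁ ∈ R.roots := hb1p.1
  have rb2 : β₂ ∈ R.roots := hb2p.1
  have rg1 : γ₁ ∈ R.roots := hg1p.1
  have rg2 : γ₂ ∈ R.roots := hg2p.1
  have hBsq : ⟪β₁, β₁⟫ = ‖β₁‖ ^ 2 := real_inner_self_eq_norm_sq β₁
  have hb1pos : (0:ℝ) < ‖β₁‖ := norm_pos_iff.mpr (R.nonzero β₁ rb1)
  have hB : (0:ℝ) < ⟪β₁, β₁⟫ := by rw [hBsq]; positivity
  obtain ⟨nb, hnb⟩ := R.cartan β₂ rb2 β₁ rb1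
  obtain ⟨n1, hn1⟩ := R.cartan γ₁ rg1 β₁ rb1
  obtain ⟨n2, hn2⟩ := R.cartan γ₂ rg2 β₁ rb1
  have bound : ∀ γ ∈ R.roots, ∀ n : ℤ, 2 * ⟪γ, β₁⟫ = (n:ℝ) * ⟪β₁, β₁⟫ →
      n ≤ 2 ∧ (n = 2 → γ = β₁) := by
    intro γ hγ n hn
    have hcs : ⟪γ, β₁⟫ ≤ ‖γ‖ * ‖β₁‖ := real_inner_le_norm γ β₁
    have hlen : ‖γ‖ ≤ ‖β₁‖ := hlong.2 γ hγ
    have h2le : (n:ℝ) ≤ 2 := by nlinarith [norm_nonneg γ]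
    refine ⟨by exact_mod_cast h2le, fun h2 => ?_⟩
    subst h2
    have hinn : ⟪γ, β₁⟫ = ‖β₁‖ ^ 2 := by push_cast at hn; nlinarith
    have hγn : ‖γ‖ = ‖β₁‖ := le_antisymm hlen (by nlinarith)
    have heq : ⟪γ, β₁⟫ = ‖γ‖ * ‖β₁‖ := by rw [hγn, hinn]; ring
    have := inner_eq_norm_mul_iff_real.mp heq
    rw [hγn] at this
    exact smul_right_injective E (ne_of_gt hb1pos) this
  -- n1 ≤ 1
  have hn1le : n1 ≤ 1 := by
    obtain ⟨hle2, heq2⟩ := bound γ₁ rg1 n1 hn1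
    rcases lt_or_eq_of_le hle2 with h | h
    · omega
    · exact absurd (heq2 h).symm h11
  have hn2le : n2 ≤ 1 := by
    obtain ⟨hle2, heq2⟩ := bound γ₂ rg2 n2 hn2
    rcases lt_or_eq_of_le hle2 with h | h
    · omega
    · exact absurd (heq2 h).symm h12
  -- nb ≥ -1
  have hnbge : -1 ≤ nb := by
    have hneg : -β₂ ∈ R.roots := R.neg_mem β₂ rb2
    have hcneg : 2 * ⟪-β₂, β₁⟫ = ((-nb : ℤ):ℝ) * ⟪β₁, β₁⟫ := by
      rw [inner_neg_left]; push_cast; linarith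
    obtain ⟨hle2, heq2⟩ := bound (-β₂) hneg (-nb) hcneg
    rcases lt_or_eq_of_le hle2 with h | h
    · omega
    · exfalso
      have hβ₂ : β₂ = -β₁ := by
        have := heq2 h
        rw [neg_eq_iff_eq_neg] at this
        exact this
      have : β₁ = 0 := aux_no_neg R.simple R.simple_indep hb1p.2 (hβ₂ ▸ hb2p.2)
      exact R.nonzero β₁ rb1 this
  -- linear relation
  have hrel : 2 + nb = n1 + n2 := by
    have h1 : ⟪β₁ + β₂, β₁⟫ = ⟪γ₁ + γ₂, β₁⟫ := by rw [hsum]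
    rw [inner_add_left, inner_add_left] at h1
    have h2 : ((2 + nb : ℤ):ℝ) * ⟪β₁, β₁⟫ = ((n1 + n2 : ℤ):ℝ) * ⟪β₁, β₁⟫ := by
      push_cast; nlinarith
    have h3 : ((2 + nb : ℤ):ℝ) = ((n1 + n2 : ℤ):ℝ) :=
      mul_right_cancel₀ (ne_of_gt hB) h2
    exact_mod_cast h3
  have hnble : nb ≤ 0 := by omega
  -- nb ≠ -1
  have hnbne : nb ≠ -1 := by
    intro h
    have href := R.reflect β₂ rb2 β₁ rb1
    have hc : 2 * ⟪β₂, β₁⟫ / ⟪β₁, β₁⟫ = -1 := by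
      rw [hnb, h]; push_cast; field_simp
    rw [hc] at href
    simp only [neg_smul, one_smul, sub_neg_eq_add] at href
    exact hab β₂ hb2 β₁ hb1 href
  have hnb0 : nb = 0 := by omega
  rw [hnb0] at hnb
  push_cast at hnb
  rw [real_inner_comm]
  linarith
end

section
/- Let I be an abelian ideal of Φ⁺ and let {β₁, β₂}, {γ₁, γ₂} be crossing pairs in I with β₁ < γ₁, γ₂ < β₂. If x := β₂ - γ₁ is a long root, then y := β₂ - γ₂, β₁, β₂, γ₁, γ₂ are all long roots. -/
local notation "⟪" x ", " y "⟫" => @inner ℝ _ _ x y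

section Aux

variable {E : Type} [NormedAddCommGroup E] [InnerProductSpace ℝ E]

private lemma rs_inner_self_pos (R : CrystRS E) {a : E} (ha : a ∈ R.roots) :
    0 < ⟪a, a⟫ := by
  have h0 : a ≠ 0 := R.nonzero a ha
  have h1 : (0:ℝ) < ‖a‖ := norm_pos_iff.mpr h0
  rw [real_inner_self_eq_norm_mul_norm]
  positivity

private lemma rs_reflect_int (R : CrystRS E) {a b : E} (ha : a ∈ R.roots) (hb : b ∈ R.roots)
    {p : ℤ} (hp : 2 * ⟪a, b⟫ = (p : ℝ) * ⟪b, b⟫) : a - (p : ℝ) • b ∈ R.roots := by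
  have h := R.reflect a ha b hb
  have hbb : ⟪b, b⟫ ≠ 0 := ne_of_gt (rs_inner_self_pos R hb)
  rwa [hp, mul_div_assoc, div_self hbb, mul_one] at h

private lemma rs_sum_mem (R : CrystRS E) {a b : E} (ha : a ∈ R.roots) (hb : b ∈ R.roots)
    (hneg : ⟪a, b⟫ < 0) (hne : a ≠ -b) : a + b ∈ R.roots := by
  obtain ⟨p, hp⟩ := R.cartan a ha b hb
  obtain ⟨q, hq0⟩ := R.cartan b hb a ha
  have hq : 2 * ⟪a, b⟫ = (q : ℝ) * ⟪a, a⟫ := by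
    linarith [hq0, real_inner_comm a b]
  have haa := rs_inner_self_pos R ha
  have hbb := rs_inner_self_pos R hb
  have hp0 : p < 0 := by
    have : (p : ℝ) < 0 := by nlinarith
    exact_mod_cast this
  have hq0' : q < 0 := by
    have : (q : ℝ) < 0 := by nlinarith
    exact_mod_cast this
  by_cases hprop : ⟪a, b⟫ * ⟪a, b⟫ = ⟪a, a⟫ * ⟪b, b⟫
  · -- proportional case
    have hna : (0:ℝ) < ‖a‖ := norm_pos_iff.mpr (R.nonzero a ha)
    have hnb : (0:ℝ) < ‖b‖ := norm_pos_iff.mpr (R.nonzero b hb)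
    have habs : ⟪a, b⟫ = -(‖a‖ * ‖b‖) := by
      have h1 : ⟪a, b⟫ * ⟪a, b⟫ = (‖a‖ * ‖b‖) * (‖a‖ * ‖b‖) := by
        rw [hprop, real_inner_self_eq_norm_mul_norm, real_inner_self_eq_norm_mul_norm]; ring
      rcases mul_self_eq_mul_self_iff.mp h1 with h2 | h2
      · nlinarith
      · exact h2
    have hkey : ‖b‖ • (-a) = ‖-a‖ • b := by
      apply inner_eq_norm_mul_iff_real.mp
      rw [inner_neg_left, norm_neg, habs, neg_neg]
    have hk : ‖a‖ • b = -(‖b‖ • a) := by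
      rw [norm_neg] at hkey
      rw [← hkey, smul_neg]
    -- p * q = 4
    have hXpos : 0 < ⟪a, b⟫ * ⟪a, b⟫ := mul_pos_of_neg_of_neg hneg hneg
    have h4 : (4:ℝ) * (⟪a, b⟫ * ⟪a, b⟫) = ((p:ℝ) * (q:ℝ)) * (⟪a, b⟫ * ⟪a, b⟫) := by
      linear_combination (2*⟪a, b⟫) * hq + ((q:ℝ)*⟪a, a⟫) * hp - ((p:ℝ)*(q:ℝ)) * hprop
    have hpq : p * q = 4 := by
      have h5 : (4:ℝ) = (p:ℝ) * (q:ℝ) := mul_right_cancel₀ (ne_of_gt hXpos) h4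
      exact_mod_cast h5.symm
    -- relation 2‖b‖ = -q‖a‖
    have hq2 : -(2 * (‖a‖ * ‖b‖)) = (q:ℝ) * (‖a‖ * ‖a‖) := by
      have hAA : ⟪a, a⟫ = ‖a‖ * ‖a‖ := real_inner_self_eq_norm_mul_norm a
      linear_combination hq - 2 * habs + (q:ℝ) * hAA
    have hABq : 2 * ‖b‖ = -(q:ℝ) * ‖a‖ := by
      have h6 : ‖a‖ * (2 * ‖b‖) = ‖a‖ * (-(q:ℝ) * ‖a‖) := by linear_combination -hq2
      exact mul_left_cancel₀ (ne_of_gt hna) h6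
    have hqcases : q = -1 ∨ q = -2 ∨ q = -4 := by
      have hql : -4 ≤ q := by nlinarith
      interval_cases q <;> omega
    rcases hqcases with hv | hv | hv
    · -- q = -1 : ‖a‖ = 2‖b‖, a + b = -b
      subst hv
      have hA : ‖a‖ = 2 * ‖b‖ := by push_cast at hABq; linarith
      rw [hA] at hk
      have hgoal : a + b = -b := by
        apply smul_right_injective E (show (2 * ‖b‖ : ℝ) ≠ 0 by positivity)
        show (2 * ‖b‖) • (a + b) = (2 * ‖b‖) • (-b)
        rw [smul_add, hk, smul_neg, hk]
        module
      rw [hgoal]; exact R.neg_mem b hb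
    · -- q = -2 : ‖a‖ = ‖b‖, b = -a, contradiction
      subst hv
      have hA : ‖b‖ = ‖a‖ := by push_cast at hABq; linarith
      rw [hA] at hk
      have hgoal : b = -a := by
        apply smul_right_injective E (ne_of_gt hna)
        show ‖a‖ • b = ‖a‖ • (-a)
        rw [hk, smul_neg]
      exact absurd (by rw [hgoal, neg_neg]) hne
    · -- q = -4 : ‖b‖ = 2‖a‖, a + b = -a
      subst hv
      have hB : ‖b‖ = 2 * ‖a‖ := by push_cast at hABq; linarith
      rw [hB] at hk
      have hgoal : a + b = -a := by
        apply smul_right_injective E (ne_of_gt hna)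
        show ‖a‖ • (a + b) = ‖a‖ • (-a)
        rw [smul_add, hk]
        module
      rw [hgoal]; exact R.neg_mem a ha
  · -- non-proportional case : strict Cauchy–Schwarz
    have hcs : ⟪a, b⟫ * ⟪a, b⟫ < ⟪a, a⟫ * ⟪b, b⟫ :=
      lt_of_le_of_ne (real_inner_mul_inner_self_le a b) hprop
    have h4 : ((p:ℝ) * (q:ℝ)) * (⟪a, a⟫ * ⟪b, b⟫) = 4 * (⟪a, b⟫ * ⟪a, b⟫) := by
      linear_combination (-(q:ℝ) * ⟪a, a⟫) * hp - (2 * ⟪a, b⟫) * hq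
    have hABpos : 0 < ⟪a, a⟫ * ⟪b, b⟫ := mul_pos haa hbb
    have hlt4 : (p:ℝ) * (q:ℝ) < 4 := by nlinarith
    have hpq3 : p * q ≤ 3 := by
      have : (p:ℝ) * (q:ℝ) < 4 := hlt4
      have h7 : ((p * q : ℤ) : ℝ) < 4 := by push_cast; exact this
      have h8 : (p * q : ℤ) < 4 := by exact_mod_cast h7
      omega
    have hcase : p = -1 ∨ q = -1 := by
      by_contra hcon
      push_neg at hcon
      have h1 : p ≤ -2 := by omega
      have h2 : q ≤ -2 := by omega
      nlinarith
    rcases hcase with hv | hv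
    · subst hv
      have hr := rs_reflect_int R ha hb hp
      have : a - ((-1 : ℤ) : ℝ) • b = a + b := by push_cast; module
      rwa [this] at hr
    · subst hv
      have hr := rs_reflect_int R hb ha hq0
      have : b - ((-1 : ℤ) : ℝ) • a = b + a := by push_cast; module
      rw [this] at hr
      rwa [add_comm]

private lemma rs_sub_mem (R : CrystRS E) {a b : E} (ha : a ∈ R.roots) (hb : b ∈ R.roots)
    (hpos : 0 < ⟪a, b⟫) (hne : a ≠ b) : a - b ∈ R.roots := by
  have hnb : -b ∈ R.roots := R.neg_mem b hb
  have h := rs_sum_mem R ha hnb (by rw [inner_neg_right]; linarith) (by simpa using hne)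
  simpa [sub_eq_add_neg] using h

private lemma eq_of_inner_ge {x d : E} (hx0 : x ≠ 0) (hle : ‖d‖ ≤ ‖x‖)
    (hinner : ⟪d, x⟫ = ‖x‖ * ‖x‖) : d = x := by
  have hnx : (0:ℝ) < ‖x‖ := norm_pos_iff.mpr hx0
  have hcs : ⟪d, x⟫ ≤ ‖d‖ * ‖x‖ := real_inner_le_norm d x
  have hdx : ‖d‖ = ‖x‖ := le_antisymm hle (by nlinarith)
  have h2 : ‖x‖ • d = ‖d‖ • x := inner_eq_norm_mul_iff_real.mp (by rw [hdx, hinner])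
  rw [hdx] at h2
  exact smul_right_injective E (ne_of_gt hnx) h2

private lemma cartan_long_bound (R : BasedRS E) {x d : E} (hx : R.IsLong x) (hd : d ∈ R.roots)
    (h1 : d ≠ x) (h2 : d ≠ -x) {n : ℤ} (hn : 2 * ⟪d, x⟫ = (n : ℝ) * ⟪x, x⟫) :
    -1 ≤ n ∧ n ≤ 1 := by
  have hxr : x ∈ R.roots := hx.1
  have hx0 : x ≠ 0 := R.nonzero x hxr
  have hnx : (0:ℝ) < ‖x‖ := norm_pos_iff.mpr hx0
  have hle : ‖d‖ ≤ ‖x‖ := hx.2 d hd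
  have hXX : ⟪x, x⟫ = ‖x‖ * ‖x‖ := real_inner_self_eq_norm_mul_norm x
  rw [hXX] at hn
  have hcs : ⟪d, x⟫ ≤ ‖d‖ * ‖x‖ := real_inner_le_norm d x
  have hcs' : -(‖d‖ * ‖x‖) ≤ ⟪d, x⟫ := by
    have := abs_real_inner_le_norm d x
    have := neg_abs_le ⟪d, x⟫
    linarith
  have hprod : ‖d‖ * ‖x‖ ≤ ‖x‖ * ‖x‖ := by nlinarith
  have hub : (n:ℝ) ≤ 2 := by nlinarith [hn, hcs, hcs', hprod, mul_pos hnx hnx]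
  have hlb : (-2:ℝ) ≤ (n:ℝ) := by nlinarith [hn, hcs, hcs', hprod, mul_pos hnx hnx]
  have hub' : n ≤ 2 := by exact_mod_cast hub
  have hlb' : -2 ≤ n := by exact_mod_cast hlb
  have hne2 : n ≠ 2 := by
    intro h; subst h
    apply h1
    apply eq_of_inner_ge hx0 hle
    push_cast at hn
    linarith
  have hnem2 : n ≠ -2 := by
    intro h; subst h
    apply h2
    have h3 : -d = x := by
      apply eq_of_inner_ge hx0 (by rw [norm_neg]; exact hle)
      rw [inner_neg_left]
      push_cast at hn
      linarith
    simpa using congrArg Neg.neg h3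
  omega

private lemma abelian_long (R : BasedRS E) {I : Set E} (hI : R.IsAbelianIdeal I)
    {a b : E} (ha : a ∈ I) (hb : b ∈ I) (hlong : R.IsLong (b - a)) :
    2 * ⟪a, b - a⟫ = -⟪b - a, b - a⟫ ∧ ⟪a, a⟫ = ⟪b - a, b - a⟫ ∧
      ⟪b, b⟫ = ⟪b - a, b - a⟫ := by
  obtain ⟨hIpos, -, hab⟩ := hI
  have har : a ∈ R.roots := (hIpos ha).1
  have hbr : b ∈ R.roots := (hIpos hb).1
  have hxr : b - a ∈ R.roots := hlong.1
  have hL : 0 < ⟪b - a, b - a⟫ := rs_inner_self_pos R.toCrystRS hxr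
  have haa := rs_inner_self_pos R.toCrystRS har
  obtain ⟨n, hn⟩ := R.cartan a har (b - a) hxr
  obtain ⟨m', hm'⟩ := R.cartan b hbr (b - a) hxr
  have hsplit : ⟪b, b - a⟫ = ⟪a, b - a⟫ + ⟪b - a, b - a⟫ := by
    rw [inner_sub_left]; ring
  have hm'n : m' = n + 2 := by
    have h0 : ((m':ℝ) - (n:ℝ) - 2) * ⟪b - a, b - a⟫ = 0 := by
      linear_combination -hm' + hn + 2 * hsplit
    rcases mul_eq_zero.mp h0 with h1 | h1
    · have : (m':ℝ) = (n:ℝ) + 2 := by linarith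
      exact_mod_cast this
    · exact absurd h1 (ne_of_gt hL)
  have hax : a ≠ b - a := by
    intro h
    rw [eq_sub_iff_add_eq] at h
    exact hab a ha a ha (by rw [h]; exact hbr)
  have hax' : a ≠ -(b - a) := by
    intro h
    rw [neg_sub, eq_sub_iff_add_eq] at h
    exact R.nonzero b hbr (add_eq_left.mp h)
  have hbx : b ≠ b - a := by
    intro h
    rw [eq_sub_iff_add_eq] at h
    exact R.nonzero a har (add_eq_left.mp h)
  have hbx' : b ≠ -(b - a) := by
    intro h
    rw [neg_sub, eq_sub_iff_add_eq] at h
    exact hab b hb b hb (by rw [h]; exact har)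
  have hna := cartan_long_bound R hlong har hax hax' hn
  have hnb := cartan_long_bound R hlong hbr hbx hbx' hm'
  have hn1 : n = -1 := by omega
  subst hn1
  push_cast at hn
  have hfirst : 2 * ⟪a, b - a⟫ = -⟪b - a, b - a⟫ := by linarith
  have hbbexp : ⟪b, b⟫ = ⟪a, a⟫ + 2 * ⟪a, b - a⟫ + ⟪b - a, b - a⟫ := by
    simp only [inner_sub_left, inner_sub_right, real_inner_comm b a]; ring
  obtain ⟨m, hm⟩ := R.cartan (b - a) hxr a har
  have hxa : ⟪b - a, a⟫ = ⟪a, b - a⟫ := real_inner_comm _ _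
  have hm0 : m < 0 := by
    have : (m:ℝ) < 0 := by nlinarith
    exact_mod_cast this
  rcases (show m = -1 ∨ m = -2 ∨ m ≤ -3 by omega) with h1 | h1 | h1
  · subst h1
    push_cast at hm
    refine ⟨hfirst, by linarith, by linarith⟩
  · subst h1
    have hr := rs_reflect_int R.toCrystRS hxr har hm
    have heq : (b - a) - ((-2 : ℤ) : ℝ) • a = a + b := by push_cast; module
    rw [heq] at hr
    exact absurd hr (hab a ha b hb)
  · have hm3 : (m:ℝ) ≤ -3 := by exact_mod_cast h1
    have hsplit2 : ⟪b, a⟫ = ⟪a, a⟫ + ⟪b - a, a⟫ := by rw [inner_sub_left]; ring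
    have hba2 : ⟪b, a⟫ < 0 := by nlinarith
    have hbna : b ≠ -a := by
      intro h
      apply hab a ha a ha
      have heq : a + a = -(b - a) := by rw [h]; abel
      rw [heq]
      exact R.neg_mem _ hxr
    exact absurd (rs_sum_mem R.toCrystRS hbr har hba2 hbna)
      (by rw [add_comm]; exact hab a ha b hb)

private lemma long_of_eq (R : BasedRS E) {x z : E} (hx : R.IsLong x) (hz : z ∈ R.roots)
    (h : ⟪z, z⟫ = ⟪x, x⟫) : R.IsLong z := by
  have h' : ‖z‖ * ‖z‖ = ‖x‖ * ‖x‖ := by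
    rw [← real_inner_self_eq_norm_mul_norm, ← real_inner_self_eq_norm_mul_norm]; exact h
  have hnorm : ‖z‖ = ‖x‖ := by
    rcases mul_self_eq_mul_self_iff.mp h' with h2 | h2
    · exact h2
    · have := norm_nonneg z; have := norm_nonneg x; linarith
  exact ⟨hz, fun γ hγ => hnorm ▸ hx.2 γ hγ⟩

end Aux


theorem statement9 {E : Type} [NormedAddCommGroup E] [InnerProductSpace ℝ E] (R : BasedRS E) (hirr : R.toCrystRS.Irred)
    (I : Set E) (hI : R.IsAbelianIdeal I)
    (β₁ β₂ γ₁ γ₂ : E)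
    (hb1 : β₁ ∈ I) (hb2 : β₂ ∈ I) (hg1 : γ₁ ∈ I) (hg2 : γ₂ ∈ I)
    (hsum : β₁ + β₂ = γ₁ + γ₂)
    (hlt1 : R.lt β₁ γ₁) (hlt2 : R.lt β₁ γ₂) (hlt3 : R.lt γ₁ β₂) (hlt4 : R.lt γ₂ β₂)
    (hx : R.IsLong (β₂ - γ₁)) :
    R.IsLong (β₂ - γ₂) ∧ R.IsLong β₁ ∧ R.IsLong β₂ ∧ R.IsLong γ₁ ∧ R.IsLong γ₂ := by
  have hIpos := hI.1
  have hab := hI.2.2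
  have hb1r : β₁ ∈ R.roots := (hIpos hb1).1
  have hb2r : β₂ ∈ R.roots := (hIpos hb2).1
  have hg1r : γ₁ ∈ R.roots := (hIpos hg1).1
  have hg2r : γ₂ ∈ R.roots := (hIpos hg2).1
  have hL : 0 < ⟪β₂ - γ₁, β₂ - γ₁⟫ := rs_inner_self_pos R.toCrystRS hx.1
  have hxx : γ₂ - β₁ = β₂ - γ₁ := by
    rw [sub_eq_sub_iff_add_eq_add, add_comm γ₂ γ₁, add_comm β₂ β₁]
    exact hsum.symm
  have hyy : β₂ - γ₂ = γ₁ - β₁ := by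
    rw [sub_eq_sub_iff_add_eq_add, add_comm β₂ β₁]
    exact hsum
  obtain ⟨hg1x, hg1L, hb2L⟩ := abelian_long R hI hg1 hb2 hx
  have hx' : R.IsLong (γ₂ - β₁) := by rw [hxx]; exact hx
  obtain ⟨hb1x, hb1L, hg2L⟩ := abelian_long R hI hb1 hg2 hx'
  rw [hxx] at hb1x hb1L hg2L
  -- β₁ ≠ -β₂
  have hne : β₁ ≠ -β₂ := by
    intro h
    rw [h] at hsum
    have h0 : γ₁ + γ₂ = 0 := by simpa using hsum.symm
    have h2 : β₂ + γ₂ = β₂ - γ₁ := by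
      rw [eq_neg_of_add_eq_zero_right h0, sub_eq_add_neg]
    exact hab β₂ hb2 γ₂ hg2 (by rw [h2]; exact hx.1)
  have hbb : 0 ≤ ⟪β₁, β₂⟫ := by
    by_contra h
    push_neg at h
    exact hab β₁ hb1 β₂ hb2 (rs_sum_mem R.toCrystRS hb1r hb2r h hne)
  obtain ⟨k, hk⟩ := R.cartan β₁ hb1r β₂ hb2r
  rw [hb2L] at hk
  have hk0 : 0 ≤ (k:ℝ) := by nlinarith
  have hb1g2 : 2 * ⟪β₁, γ₂⟫ = ⟪β₂ - γ₁, β₂ - γ₁⟫ := by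
    have hexp : ⟪β₁, γ₂⟫ = ⟪β₁, β₁⟫ + ⟪β₁, γ₂ - β₁⟫ := by
      rw [inner_sub_right]; ring
    rw [hxx] at hexp
    linarith
  have hg1eq : γ₁ = β₁ + β₂ - γ₂ := by
    rw [eq_sub_iff_add_eq]; exact hsum.symm
  have hb1g1 : 2 * ⟪β₁, γ₁⟫ = ⟪β₂ - γ₁, β₂ - γ₁⟫ + (k:ℝ) * ⟪β₂ - γ₁, β₂ - γ₁⟫ := by
    have h5 : ⟪β₁, γ₁⟫ = ⟪β₁, β₁⟫ + ⟪β₁, β₂⟫ - ⟪β₁, γ₂⟫ := by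
      conv_lhs => rw [hg1eq]
      rw [inner_sub_right, inner_add_right]
    linarith
  have hkL : 0 ≤ (k:ℝ) * ⟪β₂ - γ₁, β₂ - γ₁⟫ := mul_nonneg hk0 hL.le
  have hpos : 0 < ⟪γ₁, β₁⟫ := by
    rw [real_inner_comm]; linarith
  have hyr : γ₁ - β₁ ∈ R.roots :=
    rs_sub_mem R.toCrystRS hg1r hb1r hpos (Ne.symm hlt1.2)
  have hyexp : ⟪γ₁ - β₁, γ₁ - β₁⟫ = ⟪γ₁, γ₁⟫ + ⟪β₁, β₁⟫ - 2 * ⟪β₁, γ₁⟫ := by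
    simp only [inner_sub_left, inner_sub_right, real_inner_comm γ₁ β₁]; ring
  have hypos : 0 < ⟪γ₁ - β₁, γ₁ - β₁⟫ := rs_inner_self_pos R.toCrystRS hyr
  have hk1 : (k:ℝ) < 1 := by nlinarith
  have hk00 : k = 0 := by
    have h6 : (0:ℤ) ≤ k := by exact_mod_cast hk0
    have h7 : (k:ℤ) < 1 := by exact_mod_cast hk1
    omega
  subst hk00
  push_cast at hk hb1g1 hkL
  have hyL : ⟪γ₁ - β₁, γ₁ - β₁⟫ = ⟪β₂ - γ₁, β₂ - γ₁⟫ := by linarith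
  refine ⟨?_, long_of_eq R hx hb1r hb1L, long_of_eq R hx hb2r hb2L,
    long_of_eq R hx hg1r hg1L, long_of_eq R hx hg2r hg2L⟩
  apply long_of_eq R hx (by rw [hyy]; exact hyr)
  rw [hyy]
  exact hyL
end

section
/- Let I be an abelian ideal of Φ⁺ and β₁, β₂ ∈ I with β₁ < β₂ (standard partial order) and β₂ - β₁ ∉ Φ. Then there exist γ₁, γ₂ ∈ Φ⁺ with β₁ + β₂ = γ₁ + γ₂ and β₁ < γᵢ < β₂ for i = 1, 2. -/
local notation "⟪" x ", " y "⟫" => @inner ℝ _ _ x y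

namespace Stmt10Aux

variable {E : Type} [NormedAddCommGroup E] [InnerProductSpace ℝ E]

abbrev Mset (R : BasedRS E) : AddSubmonoid E := AddSubmonoid.closure (R.simple : Set E)

lemma inner_self_pos' {x : E} (hx : x ≠ 0) : (0:ℝ) < ⟪x, x⟫ :=
  lt_of_le_of_ne real_inner_self_nonneg
    (fun h => hx (inner_self_eq_zero.mp h.symm))

lemma exists_height (R : BasedRS E) :
    ∃ h : E →ₗ[ℝ] ℝ, ∀ a ∈ R.simple, h a = 1 := by
  classical
  set V : Submodule ℝ E :=
    Submodule.span ℝ (Set.range (fun a : {x // x ∈ R.simple} => (a : E))) with hV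
  obtain ⟨q, hq⟩ := Submodule.exists_isCompl V
  let b : Module.Basis {x // x ∈ R.simple} ℝ V := Module.Basis.span R.simple_indep
  refine ⟨b.sumCoords.comp (V.linearProjOfIsCompl q hq), fun a ha => ?_⟩
  have h2 : ((b ⟨a, ha⟩ : V) : E) = a := congrArg Subtype.val (Module.Basis.span_apply R.simple_indep ⟨a, ha⟩)
  have h1 : V.linearProjOfIsCompl q hq a = b ⟨a, ha⟩ := by
    have h3 := Submodule.linearProjOfIsCompl_apply_left hq (b ⟨a, ha⟩)
    rwa [h2] at h3
  rw [LinearMap.comp_apply, h1, Module.Basis.sumCoords_self_apply]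

lemma height_facts (R : BasedRS E) (h : E →ₗ[ℝ] ℝ) (hh : ∀ a ∈ R.simple, h a = 1)
    {x : E} (hx : x ∈ Mset R) : 0 ≤ h x ∧ (x ≠ 0 → 1 ≤ h x) := by
  induction hx using AddSubmonoid.closure_induction with
  | mem a ha =>
    have : h a = 1 := hh a (by exact_mod_cast ha)
    constructor <;> simp [this]
  | zero => simp
  | add x y hx hy ihx ihy =>
    refine ⟨by rw [map_add]; linarith [ihx.1, ihy.1], fun hne => ?_⟩
    rw [map_add]
    by_cases hx0 : x = 0
    · subst hx0
      have := ihy.2 (by simpa using hne)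
      simpa using (by linarith [ihx.1] : (1:ℝ) ≤ h 0 + h y)
    · linarith [ihx.2 hx0, ihy.1]

lemma eq_zero_of_add_eq_zero (R : BasedRS E) (h : E →ₗ[ℝ] ℝ) (hh : ∀ a ∈ R.simple, h a = 1) {x y : E} (hx : x ∈ Mset R) (hy : y ∈ Mset R)
    (hxy : x + y = 0) : x = 0 := by
  by_contra h0
  have h1 := (height_facts R h hh hx).2 h0
  have h2 := (height_facts R h hh hy).1
  have h3 : h (x + y) = 0 := by rw [hxy]; simp
  rw [map_add] at h3
  linarith

lemma add_ne_zero' (R : BasedRS E) (h : E →ₗ[ℝ] ℝ) (hh : ∀ a ∈ R.simple, h a = 1) {x y : E} (hx : x ∈ Mset R) (hy : y ∈ Mset R) (hx0 : x ≠ 0) :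
    x + y ≠ 0 := fun e => hx0 (eq_zero_of_add_eq_zero R h hh hx hy e)

lemma simple_split (R : BasedRS E) (h : E →ₗ[ℝ] ℝ) (hh : ∀ a ∈ R.simple, h a = 1) {a x y : E} (ha : a ∈ R.simple) (hx : x ∈ Mset R) (hy : y ∈ Mset R)
    (hxy : x + y = a) : x = 0 ∨ y = 0 := by
  by_contra hc
  push_neg at hc
  have h1 := (height_facts R h hh hx).2 hc.1
  have h2 := (height_facts R h hh hy).2 hc.2
  have h3 : h (x + y) = 1 := by rw [hxy]; exact hh a ha
  rw [map_add] at h3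
  linarith

lemma extract (R : BasedRS E) (v : E) {x : E} (hx : x ∈ Mset R) (hv : ⟪v, x⟫ < 0) :
    ∃ a ∈ R.simple, ⟪v, (a : E)⟫ < 0 ∧ x - a ∈ Mset R := by
  revert hv
  induction hx using AddSubmonoid.closure_induction with
  | mem a ha =>
    intro hv
    exact ⟨a, by exact_mod_cast ha, hv, by simpa using (Mset R).zero_mem⟩
  | zero =>
    intro hv
    rw [inner_zero_right] at hv
    exact absurd hv (lt_irrefl 0)
  | add x y hxm hym ihx ihy =>
    intro hv
    rw [inner_add_right] at hv
    rcases lt_or_ge ⟪v, x⟫ 0 with hx0 | hx0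
    · obtain ⟨a, ha, hva, hma⟩ := ihx hx0
      refine ⟨a, ha, hva, ?_⟩
      have := (Mset R).add_mem hma hym
      rwa [show x - a + y = x + y - a by abel] at this
    · have hy0 : ⟪v, y⟫ < 0 := by linarith
      obtain ⟨a, ha, hva, hma⟩ := ihy hy0
      refine ⟨a, ha, hva, ?_⟩
      have := (Mset R).add_mem hxm hma
      rwa [show x + (y - a) = x + y - a by abel] at this

lemma root_sub (R : BasedRS E) {x y : E} (hx : x ∈ R.roots) (hy : y ∈ R.roots)
    (hpos : 0 < ⟪x, y⟫) (hne : x ≠ y) : x - y ∈ R.roots := by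
  have hy0 : (0:ℝ) < ⟪y, y⟫ := inner_self_pos' (R.nonzero y hy)
  have hx0 : (0:ℝ) < ⟪x, x⟫ := inner_self_pos' (R.nonzero x hx)
  obtain ⟨n, hn⟩ := R.cartan x hx y hy
  obtain ⟨m, hm⟩ := R.cartan y hy x hx
  rw [real_inner_comm] at hm
  have hn1 : 1 ≤ n := by
    rcases le_or_gt 1 n with h' | h'
    · exact h'
    · exfalso
      have hc : (n:ℝ) ≤ 0 := by exact_mod_cast (by omega : n ≤ 0)
      nlinarith
  have hm1 : 1 ≤ m := by
    rcases le_or_gt 1 m with h' | h'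
    · exact h'
    · exfalso
      have hc : (m:ℝ) ≤ 0 := by exact_mod_cast (by omega : m ≤ 0)
      nlinarith
  rcases eq_or_lt_of_le hn1 with he | hlt2
  · have hcoef : 2 * ⟪x, y⟫ / ⟪y, y⟫ = 1 := by
      rw [hn, ← he]
      push_cast
      field_simp
    have hrefl := R.reflect x hx y hy
    rw [hcoef, one_smul] at hrefl
    exact hrefl
  · rcases eq_or_lt_of_le hm1 with he2 | hlt3
    · have hcoef : 2 * ⟪y, x⟫ / ⟪x, x⟫ = 1 := by
        rw [real_inner_comm, hm, ← he2]
        push_cast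
        field_simp
      have hrefl := R.reflect y hy x hx
      rw [hcoef, one_smul] at hrefl
      have := R.neg_mem _ hrefl
      rwa [neg_sub] at this
    · exfalso
      have h2n : (2:ℝ) ≤ (n:ℝ) := by exact_mod_cast hlt2
      have h2m : (2:ℝ) ≤ (m:ℝ) := by exact_mod_cast hlt3
      have h1 : 2 * ⟪y, y⟫ ≤ 2 * ⟪x, y⟫ := by nlinarith
      have h2 : 2 * ⟪x, x⟫ ≤ 2 * ⟪x, y⟫ := by nlinarith
      have hexp : ⟪x - y, x - y⟫ = ⟪x, x⟫ - 2 * ⟪x, y⟫ + ⟪y, y⟫ := by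
        simp only [inner_sub_left, inner_sub_right]
        rw [real_inner_comm y x]
        ring
      have hzz : ⟪x - y, x - y⟫ ≤ 0 := by rw [hexp]; linarith
      have h0 : x - y = 0 := real_inner_self_nonpos.mp hzz
      exact hne (sub_eq_zero.mp h0)

lemma root_add (R : BasedRS E) {x y : E} (hx : x ∈ R.roots) (hy : y ∈ R.roots)
    (hneg : ⟪x, y⟫ < 0) (hne : x ≠ -y) : x + y ∈ R.roots := by
  have hyneg : -y ∈ R.roots := R.neg_mem y hy
  have := root_sub R hx hyneg (by rw [inner_neg_right]; linarith) hne
  rwa [sub_neg_eq_add] at this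

lemma string_root (R : BasedRS E) {x γ : E} (hx : x ∈ R.roots) (hγ : γ ∈ R.roots)
    (horth : ⟪x, γ⟫ = 0) (hsub : x - γ ∈ R.roots) : x + γ ∈ R.roots := by
  have hγsq : (0:ℝ) < ⟪γ, γ⟫ := inner_self_pos' (R.nonzero _ hγ)
  have hrefl := R.reflect (x - γ) hsub γ hγ
  have hcoef : 2 * ⟪x - γ, γ⟫ / ⟪γ, γ⟫ = -2 := by
    rw [inner_sub_left, horth]
    field_simp
    ring
  rw [hcoef] at hrefl
  have hid : x - γ - (-2:ℝ) • γ = x + γ := by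
    rw [neg_smul, sub_neg_eq_add, two_smul]
    abel
  rwa [hid] at hrefl

lemma ideal_nonneg (R : BasedRS E) {I : Set E} (hI : R.IsAbelianIdeal I) {x y : E}
    (hx : x ∈ I) (hy : y ∈ I) : 0 ≤ ⟪x, y⟫ := by
  by_contra hc
  push_neg at hc
  obtain ⟨h, hh⟩ := exists_height R
  have hxp := hI.1 hx
  have hyp := hI.1 hy
  have hxr : x ∈ R.roots := hxp.1
  have hyr : y ∈ R.roots := hyp.1
  have hne : x ≠ -y := by
    intro e
    exact R.nonzero x hxr
      (eq_zero_of_add_eq_zero R h hh hxp.2 hyp.2 (by rw [e]; abel))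
  exact hI.2.2 x hx y hy (root_add R hxr hyr hc hne)

set_option maxHeartbeats 2000000 in
lemma main_ind (R : BasedRS E) (I : Set E) (hI : R.IsAbelianIdeal I)
    (h : E →ₗ[ℝ] ℝ) (hh : ∀ a ∈ R.simple, h a = 1) :
    ∀ n : ℕ, ∀ β₁ β₂ : E, β₁ ∈ I → β₂ ∈ I → R.lt β₁ β₂ → β₂ - β₁ ∉ R.roots →
    h (β₂ - β₁) ≤ (n : ℝ) →
    ∃ γ₁ γ₂ : E, γ₁ ∈ R.pos ∧ γ₂ ∈ R.pos ∧ β₁ + β₂ = γ₁ + γ₂ ∧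
      R.lt β₁ γ₁ ∧ R.lt γ₁ β₂ ∧ R.lt β₁ γ₂ ∧ R.lt γ₂ β₂ := by
  have hIup : ∀ β ∈ I, ∀ γ ∈ R.pos, R.le β γ → γ ∈ I := hI.2.1
  have hIab : ∀ β ∈ I, ∀ γ ∈ I, β + γ ∉ R.roots := hI.2.2
  have hMadd : ∀ {x y : E}, x ∈ Mset R → y ∈ Mset R → x + y ∈ Mset R :=
    fun hx hy => (Mset R).add_mem hx hy
  have hmklt : ∀ x y : E, y - x ∈ Mset R → y - x ≠ 0 → R.lt x y := by
    intro x y hm hne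
    exact ⟨hm, fun e => hne (by rw [e, sub_self])⟩
  have hsum_ne : ∀ {x y : E}, x ∈ Mset R → y ∈ Mset R → x ≠ 0 → x + y ≠ 0 :=
    fun hx hy hx0 => add_ne_zero' R h hh hx hy hx0
  intro n
  induction n with
  | zero =>
    intro β₁ β₂ hb1 hb2 hlt hdiff hn
    exfalso
    have hνM : β₂ - β₁ ∈ Mset R := hlt.1
    have hνne : β₂ - β₁ ≠ 0 := sub_ne_zero.mpr (Ne.symm hlt.2)
    have h1 := (height_facts R h hh hνM).2 hνne
    have h0 : h (β₂ - β₁) ≤ 0 := by exact_mod_cast hn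
    linarith
  | succ n ih =>
    intro β₁ β₂ hb1 hb2 hlt hdiff hn
    have hb1pos := hI.1 hb1
    have hb2pos := hI.1 hb2
    have hb1root : β₁ ∈ R.roots := hb1pos.1
    have hb2root : β₂ ∈ R.roots := hb2pos.1
    have hb1M : β₁ ∈ Mset R := hb1pos.2
    have hb2M : β₂ ∈ Mset R := hb2pos.2
    have hb1ne : β₁ ≠ 0 := R.nonzero _ hb1root
    have hb1sq : (0:ℝ) < ⟪β₁, β₁⟫ := inner_self_pos' hb1ne
    have hνM : β₂ - β₁ ∈ Mset R := hlt.1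
    have hνne : β₂ - β₁ ≠ 0 := sub_ne_zero.mpr (Ne.symm hlt.2)
    -- Step 1 : orthogonality
    have hle0 : ⟪β₁, β₂⟫ ≤ 0 := by
      by_contra hc
      push_neg at hc
      exact hdiff (root_sub R hb2root hb1root (by rwa [real_inner_comm]) (Ne.symm hlt.2))
    have horth : ⟪β₁, β₂⟫ = 0 := le_antisymm hle0 (ideal_nonneg R hI hb1 hb2)
    -- Step 2 : find a simple root α with ⟪β₁, α⟫ < 0
    have hbv : ⟪β₁, β₂ - β₁⟫ < 0 := by
      rw [inner_sub_right, horth]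
      linarith
    obtain ⟨α, hαs, hα1, hρM⟩ := extract R β₁ hνM hbv
    have hαroot : (α : E) ∈ R.roots := R.simple_sub (by exact_mod_cast hαs)
    have hαM : α ∈ Mset R := AddSubmonoid.subset_closure (by exact_mod_cast hαs)
    have hαne : α ≠ 0 := R.nonzero _ hαroot
    have hαsq : (0:ℝ) < ⟪α, α⟫ := inner_self_pos' hαne
    -- γ = β₁ + α
    have hγroot : β₁ + α ∈ R.roots := by
      refine root_add R hb1root hαroot hα1 ?_
      intro e
      exact hb1ne (eq_zero_of_add_eq_zero R h hh hb1M hαM (eq_neg_iff_add_eq_zero.mp e))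
    have hγM : β₁ + α ∈ Mset R := hMadd hb1M hαM
    have hγpos : β₁ + α ∈ R.pos := ⟨hγroot, hγM⟩
    have hγne : β₁ + α ≠ 0 := R.nonzero _ hγroot
    have hltb1γ : R.lt β₁ (β₁ + α) :=
      hmklt _ _ (by rw [add_sub_cancel_left]; exact hαM) (by rw [add_sub_cancel_left]; exact hαne)
    have hγI : β₁ + α ∈ I := hIup β₁ hb1 (β₁ + α) hγpos hltb1γ.1
    have hρid : β₂ - (β₁ + α) = β₂ - β₁ - α := by abel
    have hρne : β₂ - β₁ - α ≠ 0 := by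
      intro e
      exact hdiff ((sub_eq_zero.mp e) ▸ hαroot)
    have hltγβ₂ : R.lt (β₁ + α) β₂ :=
      hmklt _ _ (by rw [hρid]; exact hρM) (by rw [hρid]; exact hρne)
    have hαβ₂ : 0 ≤ ⟪α, β₂⟫ := by
      have h0 := ideal_nonneg R hI hγI hb2
      rw [inner_add_left, horth] at h0
      linarith
    rcases lt_or_eq_of_le hαβ₂ with hαpos | hα0
    · -- Case: ⟪α, β₂⟫ > 0 — pair {β₁+α, β₂-α}
      have hβ₂α : β₂ ≠ α := by
        intro e
        rcases simple_split R h hh hαs hb1M hνM (by rw [← e]; abel) with h1 | h2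
        · exact hb1ne h1
        · exact hνne h2
      have hγ₂root : β₂ - α ∈ R.roots :=
        root_sub R hb2root hαroot (by rwa [real_inner_comm]) hβ₂α
      have hγ₂M : β₂ - α ∈ Mset R := by
        rw [show β₂ - α = β₁ + (β₂ - β₁ - α) by abel]
        exact hMadd hb1M hρM
      refine ⟨β₁ + α, β₂ - α, hγpos, ⟨hγ₂root, hγ₂M⟩, by abel, hltb1γ, hltγβ₂, ?_, ?_⟩
      · exact hmklt _ _ (by rw [show β₂ - α - β₁ = β₂ - β₁ - α by abel]; exact hρM)
          (by rw [show β₂ - α - β₁ = β₂ - β₁ - α by abel]; exact hρne)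
      · exact hmklt _ _ (by rw [sub_sub_cancel]; exact hαM) (by rw [sub_sub_cancel]; exact hαne)
    · -- Case: ⟪α, β₂⟫ = 0
      have hα0' : ⟪α, β₂⟫ = 0 := hα0.symm
      have hγβ₂0 : ⟪β₁ + α, β₂⟫ = 0 := by rw [inner_add_left, horth, hα0']; ring
      by_cases hρroot : β₂ - β₁ - α ∈ R.roots
      · -- ρ is a root
        have hβρ : ⟪β₁, β₂ - β₁ - α⟫ = -⟪β₁, β₁⟫ - ⟪β₁, α⟫ := by
          rw [inner_sub_right, inner_sub_right, horth]
          ring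
        by_cases hA1 : ⟪β₁, β₂ - β₁ - α⟫ < 0
        · -- pair {β₁+α, β₁+ρ}
          have hγ₂root : β₁ + (β₂ - β₁ - α) ∈ R.roots := by
            refine root_add R hb1root hρroot hA1 ?_
            intro e
            exact hb1ne (eq_zero_of_add_eq_zero R h hh hb1M hρM (eq_neg_iff_add_eq_zero.mp e))
          refine ⟨β₁ + α, β₁ + (β₂ - β₁ - α), hγpos, ⟨hγ₂root, hMadd hb1M hρM⟩, by abel,
            hltb1γ, hltγβ₂, ?_, ?_⟩
          · exact hmklt _ _ (by rw [add_sub_cancel_left]; exact hρM)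
              (by rw [add_sub_cancel_left]; exact hρne)
          · exact hmklt _ _
              (by rw [show β₂ - (β₁ + (β₂ - β₁ - α)) = α by abel]; exact hαM)
              (by rw [show β₂ - (β₁ + (β₂ - β₁ - α)) = α by abel]; exact hαne)
        · -- impossible
          exfalso
          push_neg at hA1
          rw [hβρ] at hA1
          have hγb := ideal_nonneg R hI hb1 hγI
          rw [inner_add_right] at hγb
          have ht2 : ⟪β₁, α⟫ = -⟪β₁, β₁⟫ := by linarith
          have hcoef : 2 * ⟪α, β₁⟫ / ⟪β₁, β₁⟫ = -2 := by
            rw [real_inner_comm, ht2]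
            field_simp
          have hrefl := R.reflect α hαroot β₁ hb1root
          rw [hcoef] at hrefl
          have hid : α - (-2:ℝ) • β₁ = (β₁ + α) + β₁ := by
            rw [neg_smul, sub_neg_eq_add, two_smul]
            abel
          rw [hid] at hrefl
          exact hIab (β₁ + α) hγI β₁ hb1 hrefl
      · -- inductive case : ρ not a root
        have hbound : h (β₂ - (β₁ + α)) ≤ (n : ℝ) := by
          have e1 : h (β₂ - β₁) = h (β₂ - (β₁ + α)) + 1 := by
            rw [show β₂ - β₁ = (β₂ - (β₁ + α)) + α by abel, map_add, hh α hαs]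
          push_cast at hn
          linarith
        have hdiff2 : β₂ - (β₁ + α) ∉ R.roots := by rw [hρid]; exact hρroot
        obtain ⟨η₁, η₂, hη₁pos, hη₂pos, hsumη, hltγη₁, hltη₁β₂, hltγη₂, hltη₂β₂⟩ :=
          ih (β₁ + α) β₂ hγI hb2 hltγβ₂ hdiff2 hbound
        have hη₁I : η₁ ∈ I := hIup _ hγI _ hη₁pos hltγη₁.1
        have hη₂I : η₂ ∈ I := hIup _ hγI _ hη₂pos hltγη₂.1
        have hltb1η : ∀ ηa : E, R.lt (β₁ + α) ηa → R.lt β₁ ηa := by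
          intro ηa hlta
          refine hmklt _ _ ?_ ?_
          · rw [show ηa - β₁ = α + (ηa - (β₁ + α)) by abel]
            exact hMadd hαM hlta.1
          · rw [show ηa - β₁ = α + (ηa - (β₁ + α)) by abel]
            exact hsum_ne hαM hlta.1 hαne
        -- 7a : some ⟪ηᵢ, α⟫ > 0 gives a solution
        have key7a : ∀ ηa ηb : E, ηa ∈ R.pos → ηb ∈ R.pos → ηa + ηb = (β₁ + α) + β₂ →
            R.lt (β₁ + α) ηa → R.lt ηa β₂ → R.lt (β₁ + α) ηb → R.lt ηb β₂ →
            0 < ⟪ηa, α⟫ →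
            ∃ γ₁ γ₂ : E, γ₁ ∈ R.pos ∧ γ₂ ∈ R.pos ∧ β₁ + β₂ = γ₁ + γ₂ ∧
              R.lt β₁ γ₁ ∧ R.lt γ₁ β₂ ∧ R.lt β₁ γ₂ ∧ R.lt γ₂ β₂ := by
          intro ηa ηb hapos hbpos hab hlt1 hlt2 hlt3 hlt4 hinner
          have hane : ηa ≠ α := by
            intro e
            have hm : ηa - (β₁ + α) ∈ Mset R := hlt1.1
            rw [e, show (α : E) - (β₁ + α) = -β₁ by abel] at hm
            exact hb1ne (eq_zero_of_add_eq_zero R h hh hb1M hm (by abel))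
          have hγ₁root : ηa - α ∈ R.roots := root_sub R hapos.1 hαroot hinner hane
          have hγ₁M : ηa - α ∈ Mset R := by
            rw [show ηa - α = β₁ + (ηa - (β₁ + α)) by abel]
            exact hMadd hb1M hlt1.1
          refine ⟨ηa - α, ηb, ⟨hγ₁root, hγ₁M⟩, hbpos, ?_, ?_, ?_, hltb1η ηb hlt3, hlt4⟩
          · calc β₁ + β₂ = (β₁ + α) + β₂ - α := by abel
            _ = (ηa + ηb) - α := by rw [hab]
            _ = (ηa - α) + ηb := by abel
          · exact hmklt _ _
              (by rw [show ηa - α - β₁ = ηa - (β₁ + α) by abel]; exact hlt1.1)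
              (by rw [show ηa - α - β₁ = ηa - (β₁ + α) by abel];
                  exact sub_ne_zero.mpr (Ne.symm hlt1.2))
          · exact hmklt _ _
              (by rw [show β₂ - (ηa - α) = α + (β₂ - ηa) by abel]; exact hMadd hαM hlt2.1)
              (by rw [show β₂ - (ηa - α) = α + (β₂ - ηa) by abel];
                  exact hsum_ne hαM hlt2.1 hαne)
        by_cases h7a : 0 < ⟪η₁, α⟫
        · exact key7a η₁ η₂ hη₁pos hη₂pos hsumη.symm hltγη₁ hltη₁β₂ hltγη₂ hltη₂β₂ h7a
        by_cases h7a2 : 0 < ⟪η₂, α⟫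
        · exact key7a η₂ η₁ hη₂pos hη₁pos (by rw [hsumη]; abel) hltγη₂ hltη₂β₂
            hltγη₁ hltη₁β₂ h7a2
        push_neg at h7a h7a2
        -- sum identity for ⟪·, α⟫
        have hsα : ⟪η₁, α⟫ + ⟪η₂, α⟫ = ⟪β₁, α⟫ + ⟪α, α⟫ := by
          have e1 : ⟪η₁ + η₂, α⟫ = ⟪(β₁ + α) + β₂, α⟫ := by rw [hsumη]
          have e2 : ⟪β₂, α⟫ = 0 := by rw [real_inner_comm]; exact hα0'
          rw [inner_add_left, inner_add_left, inner_add_left, e2] at e1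
          linarith
        obtain ⟨nz, hnz⟩ := R.cartan β₁ hb1root α hαroot
        obtain ⟨mz, hmz⟩ := R.cartan α hαroot β₁ hb1root
        rw [real_inner_comm] at hmz
        have hnzneg : nz ≤ -1 := by
          rcases le_or_gt nz (-1) with h' | h'
          · exact h'
          · exfalso
            have hc : (0:ℝ) ≤ (nz:ℝ) := by exact_mod_cast (by omega : (0:ℤ) ≤ nz)
            nlinarith
        have hmzneg : mz ≤ -1 := by
          rcases le_or_gt mz (-1) with h' | h'
          · exact h'
          · exfalso
            have hc : (0:ℝ) ≤ (mz:ℝ) := by exact_mod_cast (by omega : (0:ℤ) ≤ mz)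
            nlinarith
        have hγsq : (0:ℝ) < ⟪β₁ + α, β₁ + α⟫ := inner_self_pos' hγne
        have hγexp : ⟪β₁ + α, β₁ + α⟫ = ⟪β₁, β₁⟫ + 2 * ⟪β₁, α⟫ + ⟪α, α⟫ := by
          simp only [inner_add_left, inner_add_right]
          rw [real_inner_comm α β₁]
          ring
        have hnz1 : nz ≠ -1 := by
          intro e
          rw [e] at hnz
          push_cast at hnz
          linarith
        have hnz2 : (nz:ℝ) ≤ -2 := by exact_mod_cast (by omega : nz ≤ -2)
        have ht_le : 2 * ⟪β₁, α⟫ ≤ -2 * ⟪α, α⟫ := by nlinarith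
        have hmz1 : mz = -1 := by
          by_contra hc
          have h2 : (mz:ℝ) ≤ -2 := by exact_mod_cast (by omega : mz ≤ -2)
          have h3 : 2 * ⟪β₁, α⟫ ≤ -2 * ⟪β₁, β₁⟫ := by nlinarith
          linarith [hγsq, hγexp]
        have hb1sq_eq : ⟪β₁, β₁⟫ = -2 * ⟪β₁, α⟫ := by
          rw [hmz1] at hmz
          push_cast at hmz
          linarith
        rcases (by omega : nz = -2 ∨ nz = -3 ∨ nz ≤ -4) with hnzc | hnzc | hnzc
        · -- nz = -2 : main contradiction chain
          rw [hnzc] at hnz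
          push_cast at hnz
          have ht : ⟪β₁, α⟫ = -⟪α, α⟫ := by linarith
          have hηα1 : ⟪η₁, α⟫ = 0 := by linarith
          have hηα2 : ⟪η₂, α⟫ = 0 := by linarith
          have hγγ : ⟪β₁ + α, β₁ + α⟫ = ⟪α, α⟫ := by rw [hγexp]; linarith
          have hβγ : ⟪β₁, β₁ + α⟫ = ⟪α, α⟫ := by rw [inner_add_right]; linarith
          have hβsum : ⟪β₁, η₁⟫ + ⟪β₁, η₂⟫ = ⟪α, α⟫ := by
            have e1 : ⟪β₁, η₁ + η₂⟫ = ⟪β₁, (β₁ + α) + β₂⟫ := by rw [hsumη]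
            rw [inner_add_right, inner_add_right, horth, hβγ] at e1
            linarith
          have hγsum : ⟪β₁ + α, η₁⟫ + ⟪β₁ + α, η₂⟫ = ⟪α, α⟫ := by
            have e1 : ⟪β₁ + α, η₁ + η₂⟫ = ⟪β₁ + α, (β₁ + α) + β₂⟫ := by rw [hsumη]
            rw [inner_add_right, inner_add_right, hγγ, hγβ₂0] at e1
            linarith
          have key2 : ∀ ηa ηb : E, ηa ∈ R.pos → ηb ∈ R.pos → ηa + ηb = (β₁ + α) + β₂ →
              R.lt (β₁ + α) ηa → R.lt ηa β₂ → R.lt (β₁ + α) ηb → R.lt ηb β₂ →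
              0 < ⟪β₁ + α, ηa⟫ → ⟪β₁, ηa - (β₁ + α)⟫ < 0 →
              ∃ γ₁ γ₂ : E, γ₁ ∈ R.pos ∧ γ₂ ∈ R.pos ∧ β₁ + β₂ = γ₁ + γ₂ ∧
                R.lt β₁ γ₁ ∧ R.lt γ₁ β₂ ∧ R.lt β₁ γ₂ ∧ R.lt γ₂ β₂ := by
            intro ηa ηb hapos hbpos hab hlt1 hlt2 hlt3 hlt4 hip hbneg
            have hζroot : ηa - (β₁ + α) ∈ R.roots :=
              root_sub R hapos.1 hγroot (by rwa [real_inner_comm]) (Ne.symm hlt1.2)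
            have hζM : ηa - (β₁ + α) ∈ Mset R := hlt1.1
            have hζne : ηa - (β₁ + α) ≠ 0 := sub_ne_zero.mpr (Ne.symm hlt1.2)
            have hγ₁root : β₁ + (ηa - (β₁ + α)) ∈ R.roots := by
              refine root_add R hb1root hζroot hbneg ?_
              intro e
              exact hb1ne (eq_zero_of_add_eq_zero R h hh hb1M hζM (eq_neg_iff_add_eq_zero.mp e))
            refine ⟨β₁ + (ηa - (β₁ + α)), ηb, ⟨hγ₁root, hMadd hb1M hζM⟩, hbpos, ?_,
              hmklt _ _ (by rw [add_sub_cancel_left]; exact hζM)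
                (by rw [add_sub_cancel_left]; exact hζne),
              ?_, hltb1η ηb hlt3, hlt4⟩
            · calc β₁ + β₂ = β₁ + ((β₁ + α) + β₂) - (β₁ + α) := by abel
              _ = β₁ + (ηa + ηb) - (β₁ + α) := by rw [hab]
              _ = (β₁ + (ηa - (β₁ + α))) + ηb := by abel
            · refine hmklt _ _ ?_ ?_
              · rw [show β₂ - (β₁ + (ηa - (β₁ + α))) = α + (β₂ - ηa) by abel]
                exact hMadd hαM hlt2.1
              · rw [show β₂ - (β₁ + (ηa - (β₁ + α))) = α + (β₂ - ηa) by abel]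
                exact hsum_ne hαM hlt2.1 hαne
          have key3 : ∀ ηa ηb : E, ηa ∈ I → ηb ∈ I → ηa ∈ R.pos → ηb ∈ R.pos →
              ηa + ηb = (β₁ + α) + β₂ → R.lt (β₁ + α) ηa → R.lt ηa β₂ →
              ⟪β₁ + α, ηb⟫ = 0 → False := by
            intro ηa ηb haI hbI hapos hbpos hab hlt1 hlt2 hb0
            have hγa : ⟪β₁ + α, ηa⟫ = ⟪α, α⟫ := by
              have e1 : ⟪β₁ + α, ηa + ηb⟫ = ⟪β₁ + α, (β₁ + α) + β₂⟫ := by rw [hab]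
              rw [inner_add_right, inner_add_right, hb0, hγγ, hγβ₂0] at e1
              linarith
            have hnr : ηb - (β₁ + α) ∉ R.roots := by
              intro hr
              have hstr := string_root R hbpos.1 hγroot
                (by rw [real_inner_comm]; exact hb0) hr
              exact hIab ηb hbI (β₁ + α) hγI hstr
            have hid2 : β₂ - ηa = ηb - (β₁ + α) := by
              calc β₂ - ηa = ((β₁ + α) + β₂) - ηa - (β₁ + α) := by abel
              _ = (ηa + ηb) - ηa - (β₁ + α) := by rw [hab]
              _ = ηb - (β₁ + α) := by abel
            have hab2 : ⟪ηa, β₂⟫ = 0 := by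
              rcases eq_or_lt_of_le (ideal_nonneg R hI haI hb2) with he | hlt0
              · exact he.symm
              · exfalso
                have := root_sub R hb2root hapos.1 (by rwa [real_inner_comm]) (Ne.symm hlt2.2)
                rw [hid2] at this
                exact hnr this
            have e3 : ⟪ηa, ηb⟫ = ⟪α, α⟫ - ⟪ηa, ηa⟫ := by
              have e4 : ⟪ηa, ηa + ηb⟫ = ⟪ηa, (β₁ + α) + β₂⟫ := by rw [hab]
              have e5 : ⟪ηa, β₁ + α⟫ = ⟪α, α⟫ := by rw [real_inner_comm]; exact hγa
              rw [inner_add_right, inner_add_right, hab2, e5] at e4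
              linarith
            have hge2 := ideal_nonneg R hI haI hbI
            have e6 : ⟪(β₁ + α) - ηa, (β₁ + α) - ηa⟫ ≤ 0 := by
              have hexp : ⟪(β₁ + α) - ηa, (β₁ + α) - ηa⟫ =
                  ⟪β₁ + α, β₁ + α⟫ - 2 * ⟪β₁ + α, ηa⟫ + ⟪ηa, ηa⟫ := by
                simp only [inner_sub_left, inner_sub_right]
                rw [real_inner_comm ηa (β₁ + α)]
                ring
              rw [hexp, hγγ, hγa]
              linarith
            have e7 : (β₁ + α) - ηa = 0 := real_inner_self_nonpos.mp e6
            exact hlt1.2 (sub_eq_zero.mp e7)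
          have hγη₁ := ideal_nonneg R hI hγI hη₁I
          have hγη₂ := ideal_nonneg R hI hγI hη₂I
          rcases eq_or_lt_of_le hγη₂ with hz2 | hp2
          · exact (key3 η₁ η₂ hη₁I hη₂I hη₁pos hη₂pos hsumη.symm hltγη₁ hltη₁β₂ hz2.symm).elim
          rcases eq_or_lt_of_le hγη₁ with hz1 | hp1
          · exact (key3 η₂ η₁ hη₂I hη₁I hη₂pos hη₁pos (by rw [hsumη]; abel)
              hltγη₂ hltη₂β₂ hz1.symm).elim
          by_cases hk1 : ⟪β₁, η₁ - (β₁ + α)⟫ < 0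
          · exact key2 η₁ η₂ hη₁pos hη₂pos hsumη.symm hltγη₁ hltη₁β₂ hltγη₂ hltη₂β₂ hp1 hk1
          by_cases hk2 : ⟪β₁, η₂ - (β₁ + α)⟫ < 0
          · exact key2 η₂ η₁ hη₂pos hη₁pos (by rw [hsumη]; abel) hltγη₂ hltη₂β₂
              hltγη₁ hltη₁β₂ hp2 hk2
          exfalso
          push_neg at hk1 hk2
          rw [inner_sub_right, hβγ] at hk1 hk2
          linarith
        · -- nz = -3
          exfalso
          rw [hnzc] at hnz
          push_cast at hnz
          have hcoef : 2 * ⟪β₁, α⟫ / ⟪α, α⟫ = -3 := by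
            rw [hnz]
            field_simp
          have hrefl := R.reflect β₁ hb1root α hαroot
          rw [hcoef] at hrefl
          have hid : β₁ - (-3:ℝ) • α = β₁ + α + α + α := by
            rw [show (-3:ℝ) = -(1 + 1 + 1) by norm_num, neg_smul, sub_neg_eq_add,
              add_smul, add_smul, one_smul]
            abel
          rw [hid] at hrefl
          have hτM : β₁ + α + α + α ∈ Mset R := hMadd (hMadd (hMadd hb1M hαM) hαM) hαM
          have hτI : β₁ + α + α + α ∈ I := by
            refine hIup β₁ hb1 _ ⟨hrefl, hτM⟩ ?_
            show β₁ + α + α + α - β₁ ∈ Mset R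
            rw [show β₁ + α + α + α - β₁ = α + α + α by abel]
            exact hMadd (hMadd hαM hαM) hαM
          have hτnn := ideal_nonneg R hI hb1 hτI
          rw [show β₁ + α + α + α = β₁ + (α + (α + α)) by abel, inner_add_right,
            inner_add_right, inner_add_right] at hτnn
          linarith
        · -- nz ≤ -4
          exfalso
          have hnz4 : (nz:ℝ) ≤ -4 := by exact_mod_cast hnzc
          have ht4 : 2 * ⟪β₁, α⟫ ≤ -4 * ⟪α, α⟫ := by nlinarith
          have hγα : ⟪β₁ + α, α⟫ < 0 := by rw [inner_add_left]; linarith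
          have hγαroot : (β₁ + α) + α ∈ R.roots := by
            refine root_add R hγroot hαroot hγα ?_
            intro e
            exact hγne (eq_zero_of_add_eq_zero R h hh hγM hαM (eq_neg_iff_add_eq_zero.mp e))
          have hp := inner_self_pos' (R.nonzero _ hγαroot)
          have hexp : ⟪(β₁ + α) + α, (β₁ + α) + α⟫ =
              ⟪β₁, β₁⟫ + 4 * ⟪β₁, α⟫ + 4 * ⟪α, α⟫ := by
            simp only [inner_add_left, inner_add_right]
            rw [real_inner_comm α β₁]
            ring
          rw [hexp] at hp
          linarith

end Stmt10Aux

theorem statement10 {E : Type} [NormedAddCommGroup E] [InnerProductSpace ℝ E] (R : BasedRS E) (hirr : R.toCrystRS.Irred)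
    (I : Set E) (hI : R.IsAbelianIdeal I)
    (β₁ β₂ : E) (hb1 : β₁ ∈ I) (hb2 : β₂ ∈ I)
    (hlt : R.lt β₁ β₂) (hdiff : β₂ - β₁ ∉ R.roots) :
    ∃ γ₁ γ₂ : E, γ₁ ∈ R.pos ∧ γ₂ ∈ R.pos ∧ β₁ + β₂ = γ₁ + γ₂ ∧
      R.lt β₁ γ₁ ∧ R.lt γ₁ β₂ ∧ R.lt β₁ γ₂ ∧ R.lt γ₂ β₂ := by
  obtain ⟨h, hh⟩ := Stmt10Aux.exists_height R
  obtain ⟨n, hn⟩ := exists_nat_ge (h (β₂ - β₁))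
  exact Stmt10Aux.main_ind R I hI h hh n β₁ β₂ hb1 hb2 hlt hdiff hn
end

section
/- Let Φ be a finite irreducible crystallographic root system with simple system Π and highest root θ = Σ m_α α. Let S ⊆ Π and I = Φ⁺ \ Φ(S), where Φ(S) is the root subsystem generated by S. Then I is an ad-nilpotent ideal of Φ⁺, and I is abelian if and only if either S = Π, or S = Π \ {α} for a simple root α with m_α = 1. -/
local notation "⟪" x ", " y "⟫" => @inner ℝ _ _ x y

section Aux

open Finset
set_option linter.unusedSectionVars false

variable {E : Type} [NormedAddCommGroup E] [InnerProductSpace ℝ E] [DecidableEq E] (R : BasedRS E)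

lemma natRep_cast (s : Finset E) (c : E → ℕ) :
    (∑ α ∈ s, c α • α : E) = ∑ α ∈ s, ((c α : ℝ)) • α := by
  simp [Nat.cast_smul_eq_nsmul]

lemma intRep_cast (s : Finset E) (c : E → ℤ) :
    (∑ α ∈ s, c α • α : E) = ∑ α ∈ s, ((c α : ℝ)) • α := by
  simp [Int.cast_smul_eq_zsmul]

namespace BasedRS

/-- Uniqueness of real coefficients w.r.t. the simple roots. -/
lemma unique_coeff {c d : E → ℝ}
    (h : ∑ α ∈ R.simple, c α • α = ∑ α ∈ R.simple, d α • α) :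
    ∀ α ∈ R.simple, c α = d α := by
  have h2 : ∑ α ∈ R.simple, (c α - d α) • α = 0 := by
    simp only [sub_smul, Finset.sum_sub_distrib, h, sub_self]
  have h3 : ∑ i : {x // x ∈ R.simple}, (c i - d i) • (i : E) = 0 := by
    rw [Finset.sum_coe_sort R.simple (fun α => (c α - d α) • α)]; exact h2
  intro α hα
  have := linearIndependent_iff'.1 R.simple_indep Finset.univ
    (fun i => c i - d i) h3 ⟨α, hα⟩ (Finset.mem_univ _)
  simpa using sub_eq_zero.mp (by simpa using this)

/-- ℕ-representation of elements of the monoid closure of the simple roots. -/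
lemma closure_rep {v : E} (hv : v ∈ AddSubmonoid.closure (R.simple : Set E)) :
    ∃ c : E → ℕ, v = ∑ α ∈ R.simple, c α • α := by
  induction hv using AddSubmonoid.closure_induction with
  | mem x hx =>
      exact ⟨fun y => if y = x then 1 else 0, by
        simp [Finset.sum_ite_eq' R.simple x, Finset.mem_coe.mp hx]⟩
  | zero => exact ⟨fun _ => 0, by simp⟩
  | add x y hx hy ihx ihy =>
      obtain ⟨c, hc⟩ := ihx
      obtain ⟨d, hd⟩ := ihy
      exact ⟨c + d, by simp [hc, hd, add_smul, add_nsmul, Finset.sum_add_distrib]⟩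

lemma rep_mem_closure (c : E → ℕ) :
    ∑ α ∈ R.simple, c α • α ∈ AddSubmonoid.closure (R.simple : Set E) :=
  AddSubmonoid.sum_mem _ fun α hα =>
    AddSubmonoid.nsmul_mem _ (AddSubmonoid.subset_closure hα) (c α)

end BasedRS
end Aux
section Aux2
open Finset
set_option linter.unusedSectionVars false
variable {E : Type} [NormedAddCommGroup E] [InnerProductSpace ℝ E] [DecidableEq E] (R : BasedRS E)
namespace BasedRS

/-- Membership in the ℤ-span of a subset S of simple roots, in terms of an ℕ-representation. -/
lemma mem_span_iff_coeff (S : Finset E) (hS : S ⊆ R.simple) (c : E → ℕ) {v : E}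
    (hv : v = ∑ α ∈ R.simple, c α • α) :
    v ∈ Submodule.span ℤ (S : Set E) ↔ ∀ α ∈ R.simple, α ∉ S → c α = 0 := by
  constructor
  · intro h
    obtain ⟨f, -, hf⟩ := Submodule.mem_span_finset.mp h
    have hf' : v = ∑ α ∈ R.simple, (if α ∈ S then f α else 0) • α := by
      rw [← hf, ← Finset.sum_subset hS (fun x _ hxS => by simp [hxS])]
      exact (Finset.sum_congr rfl fun x hx => by simp [hx]).symm
    have hu := R.unique_coeff (c := fun α => ((c α : ℝ)))
      (d := fun α => ((if α ∈ S then f α else 0 : ℤ) : ℝ))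
      (by rw [← natRep_cast, ← hv, hf']; rw [intRep_cast])
    intro α hα hαS
    have := hu α hα
    simp only [hαS, if_false, Int.cast_zero] at this
    exact_mod_cast this
  · intro h
    have : v = ∑ α ∈ S, c α • α := by
      rw [hv, Finset.sum_subset hS]
      intro x hx hxS
      rw [h x hx hxS, zero_smul]
    rw [this]
    refine Submodule.sum_mem _ fun α hα => ?_
    have := Submodule.smul_mem (Submodule.span ℤ (S : Set E)) ((c α : ℤ))
      (Submodule.subset_span (Finset.mem_coe.mpr hα))
    simpa [natCast_zsmul] using this

/-- Key geometric lemma: if two distinct roots have positive inner product,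
their difference is a root. -/
lemma inner_self_pos' {x : E} (hx : x ≠ 0) : 0 < ⟪x, x⟫ := by
  rw [real_inner_self_eq_norm_sq]
  exact pow_pos (norm_pos_iff.mpr hx) 2

/-- Key geometric lemma continued. -/
lemma root_sub_root {α β : E} (hα : α ∈ R.roots) (hβ : β ∈ R.roots)
    (hpos : 0 < ⟪α, β⟫) (hne : α ≠ β) : α - β ∈ R.roots := by
  obtain ⟨n, hn⟩ := R.cartan α hα β hβ
  obtain ⟨m, hm⟩ := R.cartan β hβ α hα
  have hαα : 0 < ⟪α, α⟫ := inner_self_pos' (R.nonzero α hα)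
  have hββ : 0 < ⟪β, β⟫ := inner_self_pos' (R.nonzero β hβ)
  have hβα : 0 < ⟪β, α⟫ := by rwa [real_inner_comm]
  have hn1 : 1 ≤ n := by
    by_contra hc
    push_neg at hc
    have : (n : ℝ) ≤ 0 := by exact_mod_cast Int.lt_add_one_iff.mp hc
    nlinarith
  have hm1 : 1 ≤ m := by
    by_contra hc
    push_neg at hc
    have : (m : ℝ) ≤ 0 := by exact_mod_cast Int.lt_add_one_iff.mp hc
    nlinarith
  by_cases hn2 : n = 1
  · have := R.reflect α hα β hβ
    rw [hn, hn2] at this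
    simpa [mul_div_assoc, div_self hββ.ne', div_self (pow_ne_zero 2 (norm_ne_zero_iff.mpr (R.nonzero β hβ)))] using this
  by_cases hm2 : m = 1
  · have := R.reflect β hβ α hα
    rw [hm, hm2] at this
    have h2 : β - α ∈ R.roots := by
      simpa [mul_div_assoc, div_self hαα.ne', div_self (pow_ne_zero 2 (norm_ne_zero_iff.mpr (R.nonzero α hα)))] using this
    simpa using R.neg_mem _ h2
  · exfalso
    have hn2' : (2 : ℝ) ≤ (n : ℝ) := by
      have : 2 ≤ n := by omega
      exact_mod_cast this
    have hm2' : (2 : ℝ) ≤ (m : ℝ) := by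
      have : 2 ≤ m := by omega
      exact_mod_cast this
    have hcomm : ⟪β, α⟫ = ⟪α, β⟫ := real_inner_comm α β
    have h1 : ⟪β, β⟫ ≤ ⟪α, β⟫ := by
      nlinarith [mul_nonneg (by linarith : (0:ℝ) ≤ (n:ℝ) - 2) hββ.le]
    have h2 : ⟪α, α⟫ ≤ ⟪α, β⟫ := by
      nlinarith [mul_nonneg (by linarith : (0:ℝ) ≤ (m:ℝ) - 2) hαα.le]
    have h3 : ⟪α - β, α - β⟫ ≤ 0 := by
      have expand : ⟪α - β, α - β⟫ = ⟪α, α⟫ - 2 * ⟪α, β⟫ + ⟪β, β⟫ := by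
        rw [inner_sub_left, inner_sub_right, inner_sub_right, real_inner_comm α β]; ring
      linarith
    have : α - β = 0 := by
      by_contra hc
      exact absurd h3 (not_le.mpr (inner_self_pos' hc))
    exact hne (sub_eq_zero.mp this)

/-- Sign lemma: the real coefficients of a root w.r.t. the simple roots
are all nonnegative or all nonpositive. -/
lemma root_sign {ρ : E} (hρ : ρ ∈ R.roots) {c : E → ℝ}
    (hc : ρ = ∑ α ∈ R.simple, c α • α) :
    (∀ α ∈ R.simple, 0 ≤ c α) ∨ (∀ α ∈ R.simple, c α ≤ 0) := by
  rcases R.decomp ρ hρ with h | h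
  · left
    obtain ⟨d, hd⟩ := R.closure_rep h
    intro α hα
    have := R.unique_coeff (c := c) (d := fun α => ((d α : ℝ)))
      (by rw [← hc, ← natRep_cast, ← hd]) α hα
    rw [this]; positivity
  · right
    obtain ⟨d, hd⟩ := R.closure_rep h
    intro α hα
    have heq : ∑ α ∈ R.simple, c α • α = ∑ α ∈ R.simple, (-((d α : ℝ))) • α := by
      rw [← hc]
      have : (∑ α ∈ R.simple, (-((d α : ℝ))) • α) = -∑ α ∈ R.simple, ((d α : ℝ)) • α := by
        simp [neg_smul, Finset.sum_neg_distrib]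
      rw [this, ← natRep_cast, ← hd, neg_neg]
    have := R.unique_coeff heq α hα
    rw [this]
    simp

end BasedRS
end Aux2
section Aux3
open Finset
set_option linter.unusedSectionVars false
variable {E : Type} [NormedAddCommGroup E] [InnerProductSpace ℝ E] [DecidableEq E] (R : BasedRS E)
namespace BasedRS

lemma inner_sum_rep (c : E → ℕ) (β : E) :
    ⟪β, (∑ α ∈ R.simple, c α • α : E)⟫ = ∑ α ∈ R.simple, ((c α : ℝ)) * ⟪β, α⟫ := by
  rw [natRep_cast, inner_sum]
  exact Finset.sum_congr rfl fun α _ => real_inner_smul_right β α _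

/-- Decomposition step for positive roots that are not simple. -/
lemma pos_step {β : E} {c : E → ℕ} (hβ : β ∈ R.roots)
    (hc : β = ∑ α ∈ R.simple, c α • α) (hns : β ∉ R.simple) :
    ∃ δ, ∃ c' : E → ℕ, δ ∈ R.simple ∧ 1 ≤ c δ ∧ 0 < ⟪β, δ⟫ ∧ β - δ ∈ R.roots ∧
      (β - δ = ∑ α ∈ R.simple, c' α • α) ∧
      ((∑ α ∈ R.simple, c' α) = (∑ α ∈ R.simple, c α) - 1) ∧
      (∀ x, c' x = if x = δ then c x - 1 else c x) := by
  have hββ : 0 < ⟪β, β⟫ := BasedRS.inner_self_pos' (R.nonzero β hβ)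
  have hsum : ⟪β, β⟫ = ∑ α ∈ R.simple, ((c α : ℝ)) * ⟪β, α⟫ := by
    rw [← R.inner_sum_rep c β, ← hc]
  have hex : ∃ δ ∈ R.simple, 0 < ((c δ : ℝ)) * ⟪β, δ⟫ := by
    by_contra hcon
    push_neg at hcon
    have := Finset.sum_nonpos (fun α hα => hcon α hα)
    rw [← hsum] at this
    linarith
  obtain ⟨δ, hδ, hδpos⟩ := hex
  have hcδ : 1 ≤ c δ := by
    rcases Nat.eq_zero_or_pos (c δ) with h | h
    · rw [h] at hδpos; simp at hδpos
    · exact h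
  have hβδ : 0 < ⟪β, δ⟫ := by
    by_contra h
    push_neg at h
    have : ((c δ : ℝ)) * ⟪β, δ⟫ ≤ 0 := mul_nonpos_of_nonneg_of_nonpos (by positivity) h
    linarith
  have hδr : δ ∈ R.roots := R.simple_sub (Finset.mem_coe.mpr hδ)
  have hne : β ≠ δ := fun h => hns (h ▸ hδ)
  have hroot : β - δ ∈ R.roots := R.root_sub_root hβ hδr hβδ hne
  have key : ∀ x, c x = (if x = δ then c x - 1 else c x) + (if x = δ then 1 else 0) := by
    intro x
    by_cases h : x = δ
    · subst h; simp; omega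
    · simp [h]
  have hsplit : ∑ α ∈ R.simple, c α • α
      = (∑ α ∈ R.simple, (if α = δ then c α - 1 else c α) • α) + δ := by
    calc ∑ α ∈ R.simple, c α • α
        = ∑ α ∈ R.simple, ((if α = δ then c α - 1 else c α) • α
            + (if α = δ then 1 else 0) • α) := by
          refine Finset.sum_congr rfl fun α _ => ?_
          rw [← add_smul, ← key]
      _ = (∑ α ∈ R.simple, (if α = δ then c α - 1 else c α) • α)
            + ∑ α ∈ R.simple, (if α = δ then 1 else 0) • α :=
          Finset.sum_add_distrib
      _ = (∑ α ∈ R.simple, (if α = δ then c α - 1 else c α) • α) + δ := by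
          congr 1
          have h1 : ∀ α : E, (if α = δ then (1:ℕ) else 0) • α = (if α = δ then α else 0) := by
            intro α; split <;> simp
          rw [Finset.sum_congr rfl fun α _ => h1 α, Finset.sum_ite_eq' R.simple δ (fun α => α)]
          simp [hδ]
  have hcount : ∑ α ∈ R.simple, c α
      = (∑ α ∈ R.simple, (if α = δ then c α - 1 else c α)) + 1 := by
    calc ∑ α ∈ R.simple, c α
        = ∑ α ∈ R.simple, ((if α = δ then c α - 1 else c α) + (if α = δ then 1 else 0)) :=
          Finset.sum_congr rfl fun α _ => key α
      _ = (∑ α ∈ R.simple, (if α = δ then c α - 1 else c α))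
            + ∑ α ∈ R.simple, (if α = δ then 1 else 0) := Finset.sum_add_distrib
      _ = _ := by
          rw [Finset.sum_ite_eq' R.simple δ (fun _ => (1:ℕ))]
          simp [hδ]
  refine ⟨δ, fun x => if x = δ then c x - 1 else c x, hδ, hcδ, hβδ, hroot,
    by rw [hc, hsplit]; abel, ?_, fun x => rfl⟩
  show (∑ α ∈ R.simple, (if α = δ then c α - 1 else c α)) = (∑ α ∈ R.simple, c α) - 1
  omega

/-- Chain lemma: every positive root is the sum of a list of simple roots all of
whose nonempty prefixes sum to positive roots. -/
lemma chain_exists : ∀ n : ℕ, ∀ β : E, ∀ c : E → ℕ, β ∈ R.roots →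
    β = ∑ α ∈ R.simple, c α • α → (∑ α ∈ R.simple, c α) = n →
    ∃ L : List E, (∀ a ∈ L, a ∈ R.simple) ∧ L ≠ [] ∧ L.sum = β ∧
      ∀ k, 1 ≤ k → k ≤ L.length → (L.take k).sum ∈ R.pos := by
  intro n
  induction n using Nat.strong_induction_on with
  | _ n ih =>
    intro β c hβ hc hn
    have hpos : β ∈ R.pos := ⟨hβ, hc ▸ R.rep_mem_closure c⟩
    by_cases hns : β ∈ R.simple
    · refine ⟨[β], by simp [hns], by simp, by simp, ?_⟩
      intro k h1 h2
      simp only [List.length_singleton] at h2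
      have : k = 1 := le_antisymm h2 h1
      subst this
      simpa using hpos
    · obtain ⟨δ, c', hδ, hcδ, hβδ, hroot, hrep, hsum, hpt⟩ := R.pos_step hβ hc hns
      have hn1 : 1 ≤ n := by
        rcases Nat.eq_zero_or_pos n with h | h
        · exfalso
          apply R.nonzero β hβ
          rw [hc]
          refine Finset.sum_eq_zero fun α hα => ?_
          have h0 : c α = 0 := Finset.sum_eq_zero_iff.mp (hn.trans h) α hα
          rw [h0, zero_smul]
        · exact h
      obtain ⟨L', hL'mem, hL'ne, hL'sum, hL'pref⟩ :=
        ih (n - 1) (by omega) (β - δ) c' hroot hrep (by rw [hsum]; omega)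
      refine ⟨L' ++ [δ], ?_, by simp, ?_, ?_⟩
      · intro a ha
        rcases List.mem_append.mp ha with h | h
        · exact hL'mem a h
        · rw [List.mem_singleton.mp h]; exact hδ
      · rw [List.sum_append, hL'sum]
        simp
      · intro k h1 h2
        rcases le_or_gt k L'.length with hk | hk
        · have : (L' ++ [δ]).take k = L'.take k := by
            simp [List.take_append, Nat.sub_eq_zero_of_le hk]
          rw [this]
          exact hL'pref k h1 hk
        · have hlen : (L' ++ [δ]).length = L'.length + 1 := by simp
          have hk2 : (L' ++ [δ]).length ≤ k := by omega
          rw [List.take_of_length_le hk2, List.sum_append, hL'sum]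
          simpa using hpos

end BasedRS
end Aux3
section Aux4
open Finset
set_option linter.unusedSectionVars false
variable {E : Type} [NormedAddCommGroup E] [InnerProductSpace ℝ E] [DecidableEq E] (R : BasedRS E)

/-- Sum of a list with elements in a finset, as a finset sum of counts. -/
lemma list_sum_count (s : Finset E) :
    ∀ L : List E, (∀ a ∈ L, a ∈ s) → L.sum = ∑ α ∈ s, (L.count α) • α := by
  intro L
  induction L with
  | nil => intro _; simp
  | cons a t ih =>
      intro h
      have ha : a ∈ s := h a List.mem_cons_self
      have ht : ∀ x ∈ t, x ∈ s := fun x hx => h x (List.mem_cons_of_mem a hx)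
      rw [List.sum_cons, ih ht]
      have : ∀ α ∈ s, ((a :: t).count α) • α = t.count α • α + (if α = a then 1 else 0) • α := by
        intro α _
        have hcnt : (a :: t).count α = t.count α + if α = a then 1 else 0 := by
          rw [List.count_cons]
          congr 1
          by_cases h' : α = a
          · rw [if_pos (by simpa using h'.symm), if_pos h']
          · rw [if_neg (by simpa using fun e => h' e.symm), if_neg h']
        rw [hcnt, add_smul]
      rw [Finset.sum_congr rfl this, Finset.sum_add_distrib]
      have h1 : ∀ α : E, (if α = a then (1:ℕ) else 0) • α = (if α = a then α else 0) := by
        intro α; split <;> simp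
      rw [Finset.sum_congr rfl fun α _ => h1 α, Finset.sum_ite_eq' s a (fun α => α)]
      simp [ha]
      abel

/-- From a list with at least two entries satisfying `p`, extract a position whose
entry satisfies `p` and whose prefix contains an entry satisfying `p`. -/
lemma two_count_split (p : E → Prop) [DecidablePred p] :
    ∀ L : List E, 2 ≤ L.countP (fun a => decide (p a)) →
      ∃ k : ℕ, ∃ hk : k < L.length, p (L[k]'hk) ∧
        1 ≤ (L.take k).countP (fun a => decide (p a)) := by
  have hcons : ∀ (a : E) (l : List E), (a :: l).countP (fun a => decide (p a))
      = l.countP (fun a => decide (p a)) + if p a then 1 else 0 := by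
    intro a l
    rw [List.countP_cons]
    congr 1
    by_cases h' : p a
    · rw [if_pos h', if_pos (by simpa using h')]
    · rw [if_neg h', if_neg (by simpa using h')]
  intro L
  induction L with
  | nil => intro h; simp at h
  | cons a t ih =>
      intro h
      by_cases hpa : p a
      · have h1 : 1 ≤ t.countP (fun a => decide (p a)) := by
          rw [hcons, if_pos hpa] at h
          omega
        have hex : ∃ x ∈ t, p x := by
          by_contra hc
          push_neg at hc
          have : t.countP (fun a => decide (p a)) = 0 := by
            rw [List.countP_eq_zero]
            intro x hx
            simpa using hc x hx
          omega
        obtain ⟨x, hxt, hpx⟩ := hex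
        obtain ⟨m, hmlt, hm⟩ := List.getElem_of_mem hxt
        refine ⟨m + 1, by simpa using hmlt, by simpa [hm] using hpx, ?_⟩
        rw [List.take_succ_cons, hcons, if_pos hpa]
        omega
      · have h1 : 2 ≤ t.countP (fun a => decide (p a)) := by
          rw [hcons, if_neg hpa, add_zero] at h
          exact h
        obtain ⟨k, hk, hp, hpref⟩ := ih h1
        refine ⟨k + 1, by simpa using hk, by simpa using hp, ?_⟩
        rw [List.take_succ_cons, hcons, if_neg hpa, add_zero]
        exact hpref

/-- Orthogonality of spans of orthogonal finite sets. -/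
lemma span_orth (s t : Finset E) (h : ∀ x ∈ s, ∀ y ∈ t, ⟪x, y⟫ = 0) :
    ∀ a ∈ Submodule.span ℝ (s : Set E), ∀ b ∈ Submodule.span ℝ (t : Set E), ⟪a, b⟫ = 0 := by
  intro a ha b hb
  obtain ⟨f, -, hf⟩ := Submodule.mem_span_finset.mp ha
  obtain ⟨g, -, hg⟩ := Submodule.mem_span_finset.mp hb
  rw [← hf, ← hg, sum_inner]
  refine Finset.sum_eq_zero fun x hx => ?_
  rw [real_inner_smul_left, inner_sum]
  rw [Finset.sum_eq_zero fun y hy => ?_, mul_zero]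
  rw [real_inner_smul_right, h x hx y hy, mul_zero]

end Aux4
section Aux5
open Finset
set_option linter.unusedSectionVars false
variable {E : Type} [NormedAddCommGroup E] [InnerProductSpace ℝ E] [DecidableEq E] (R : BasedRS E)
namespace BasedRS

/-- Distinct simple roots have nonpositive inner products. -/
lemma simple_inner_nonpos {α β : E} (hα : α ∈ R.simple) (hβ : β ∈ R.simple)
    (hne : α ≠ β) : ⟪α, β⟫ ≤ 0 := by
  by_contra h
  push_neg at h
  have hroot : α - β ∈ R.roots :=
    R.root_sub_root (R.simple_sub hα) (R.simple_sub hβ) h hne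
  have hrep : α - β = ∑ x ∈ R.simple,
      ((if x = α then (1:ℝ) else 0) - (if x = β then (1:ℝ) else 0)) • x := by
    have h1 : ∀ x : E, ((if x = α then (1:ℝ) else 0) - (if x = β then (1:ℝ) else 0)) • x
        = (if x = α then x else 0) - (if x = β then x else 0) := by
      intro x
      rw [sub_smul]
      congr 1 <;> split <;> simp
    rw [Finset.sum_congr rfl fun x _ => h1 x, Finset.sum_sub_distrib,
      Finset.sum_ite_eq' R.simple α (fun x => x), Finset.sum_ite_eq' R.simple β (fun x => x)]
    simp [hα, hβ]
  rcases R.root_sign hroot hrep with hs | hs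
  · have := hs β hβ
    simp [Ne.symm hne] at this
    linarith
  · have := hs α hα
    simp [hne] at this
    linarith

/-- `-α` is never a nonnegative combination of simple roots, for `α` simple. -/
lemma neg_simple_not_closure {α : E} (hα : α ∈ R.simple) :
    -α ∉ AddSubmonoid.closure (R.simple : Set E) := by
  intro h
  obtain ⟨c, hc⟩ := R.closure_rep h
  have heq : ∑ x ∈ R.simple, ((c x : ℝ)) • x
      = ∑ x ∈ R.simple, (-(if x = α then (1:ℝ) else 0)) • x := by
    rw [← natRep_cast, ← hc]
    have h1 : ∀ x : E, (-(if x = α then (1:ℝ) else 0)) • x = -(if x = α then x else 0) := by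
      intro x; split <;> simp
    rw [Finset.sum_congr rfl fun x _ => h1 x, Finset.sum_neg_distrib,
      Finset.sum_ite_eq' R.simple α (fun x => x)]
    simp [hα]
  have := R.unique_coeff heq α hα
  simp at this
  have h0 : (0:ℝ) ≤ (c α : ℝ) := by positivity
  rw [this] at h0
  linarith

/-- The highest root has nonnegative inner product with every simple root. -/
lemma highest_inner_nonneg {θ : E} (hθ : R.IsHighest θ) {α : E} (hα : α ∈ R.simple) :
    0 ≤ ⟪θ, α⟫ := by
  by_contra h
  push_neg at h
  have hαr : α ∈ R.roots := R.simple_sub hα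
  have hnegr : -α ∈ R.roots := R.neg_mem α hαr
  have hθr : θ ∈ R.roots := hθ.1.1
  have hne : θ ≠ -α := by
    intro he
    have : -α ∈ AddSubmonoid.closure (R.simple : Set E) := he ▸ hθ.1.2
    exact R.neg_simple_not_closure hα this
  have hpos : 0 < ⟪θ, -α⟫ := by
    rw [inner_neg_right]
    linarith
  have hroot : θ + α ∈ R.roots := by
    have := R.root_sub_root hθr hnegr hpos hne
    simpa [sub_neg_eq_add] using this
  have hle := hθ.2 (θ + α) hroot
  unfold BasedRS.le at hle
  have : θ - (θ + α) = -α := by abel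
  rw [this] at hle
  exact R.neg_simple_not_closure hα hle

/-- Orthogonality between the support of θ and the rest of the simple roots. -/
lemma support_orth {θ : E} (hθ : R.IsHighest θ) {cθ : E → ℕ}
    (hc : θ = ∑ x ∈ R.simple, cθ x • x) :
    ∀ β ∈ R.simple, ∀ α ∈ R.simple, cθ β ≠ 0 → cθ α = 0 → ⟪β, α⟫ = 0 := by
  intro β hβ α hα hcβ hcα
  have hnn : 0 ≤ ⟪θ, α⟫ := R.highest_inner_nonneg hθ hα
  have hsum : ⟪θ, α⟫ = ∑ x ∈ R.simple, ((cθ x : ℝ)) * ⟪x, α⟫ := by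
    conv_lhs => rw [hc, natRep_cast]
    rw [sum_inner]
    exact Finset.sum_congr rfl fun x _ => real_inner_smul_left x α _
  have hterms : ∀ x ∈ R.simple, ((cθ x : ℝ)) * ⟪x, α⟫ ≤ 0 := by
    intro x hx
    rcases Nat.eq_zero_or_pos (cθ x) with h0 | h0
    · rw [h0]; simp
    · have hxα : x ≠ α := fun he => by rw [he] at h0; omega
      exact mul_nonpos_of_nonneg_of_nonpos (by positivity)
        (R.simple_inner_nonpos hx hα hxα)
  have hzero : ∀ x ∈ R.simple, ((cθ x : ℝ)) * ⟪x, α⟫ = 0 := by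
    have hsle : ∑ x ∈ R.simple, ((cθ x : ℝ)) * ⟪x, α⟫ ≤ 0 := Finset.sum_nonpos hterms
    have hseq : ∑ x ∈ R.simple, ((cθ x : ℝ)) * ⟪x, α⟫ = 0 := le_antisymm hsle (hsum ▸ hnn)
    exact (Finset.sum_eq_zero_iff_of_nonpos hterms).mp hseq
  have := hzero β hβ
  have hcβ' : ((cθ β : ℝ)) ≠ 0 := by exact_mod_cast hcβ
  exact (mul_eq_zero.mp this).resolve_left hcβ'

end BasedRS
end Aux5
section Aux6
open Finset
set_option linter.unusedSectionVars false
variable {E : Type} [NormedAddCommGroup E] [InnerProductSpace ℝ E] [DecidableEq E] (R : BasedRS E)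
namespace BasedRS

/-- If a root is simple, any ℕ-representation of it is the indicator function. -/
lemma simple_rep {β : E} (hβ : β ∈ R.simple) {c : E → ℕ}
    (hc : β = ∑ x ∈ R.simple, c x • x) :
    ∀ x ∈ R.simple, c x = if x = β then 1 else 0 := by
  have hind : β = ∑ x ∈ R.simple, (if x = β then (1:ℕ) else 0) • x := by
    have h1 : ∀ x : E, (if x = β then (1:ℕ) else 0) • x = (if x = β then x else 0) := by
      intro x; split <;> simp
    rw [Finset.sum_congr rfl fun x _ => h1 x, Finset.sum_ite_eq' R.simple β (fun x => x)]
    simp [hβ]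
  intro x hx
  have heq := hc.symm.trans hind
  have := R.unique_coeff (c := fun x => ((c x : ℝ)))
    (d := fun x => (((if x = β then 1 else 0 : ℕ)) : ℝ))
    ((natRep_cast R.simple c).symm.trans (heq.trans (natRep_cast R.simple _))) x hx
  have h2 : ((c x : ℝ)) = (((if x = β then 1 else 0 : ℕ)) : ℝ) := this
  exact_mod_cast h2

/-- Support dichotomy: given an orthogonal splitting of the simple roots determined by
a predicate `P`, the support of every root lies entirely on one side. -/
lemma support_dichotomy (P : E → Prop) [DecidablePred P]
    (horth : ∀ β ∈ R.simple, ∀ α ∈ R.simple, P β → ¬ P α → ⟪β, α⟫ = 0) :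
    ∀ n : ℕ, ∀ β : E, ∀ c : E → ℕ, β ∈ R.roots →
      β = ∑ x ∈ R.simple, c x • x → (∑ x ∈ R.simple, c x) = n →
      (∀ x ∈ R.simple, c x ≠ 0 → P x) ∨ (∀ x ∈ R.simple, c x ≠ 0 → ¬ P x) := by
  intro n
  induction n using Nat.strong_induction_on with
  | _ n ih =>
    intro β c hβ hc hn
    by_cases hns : β ∈ R.simple
    · have hrep := R.simple_rep hns hc
      by_cases hP : P β
      · left
        intro x hx hcx
        have := hrep x hx
        by_cases hxβ : x = β
        · rw [hxβ]; exact hP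
        · rw [if_neg hxβ] at this; exact absurd this hcx
      · right
        intro x hx hcx
        have := hrep x hx
        by_cases hxβ : x = β
        · rw [hxβ]; exact hP
        · rw [if_neg hxβ] at this; exact absurd this hcx
    · obtain ⟨δ, c', hδ, hcδ, hβδ, hroot, hrep, hsum, hpt⟩ := R.pos_step hβ hc hns
      have hn1 : 1 ≤ n := by
        rcases Nat.eq_zero_or_pos n with h | h
        · exfalso
          apply R.nonzero β hβ
          rw [hc]
          refine Finset.sum_eq_zero fun x hx => ?_
          rw [Finset.sum_eq_zero_iff.mp (hn.trans h) x hx, zero_smul]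
        · exact h
      have hγ0 : β - δ ≠ 0 := R.nonzero _ hroot
      have hex : ∃ x₀ ∈ R.simple, c' x₀ ≠ 0 := by
        by_contra hcon
        push_neg at hcon
        apply hγ0
        rw [hrep]
        exact Finset.sum_eq_zero fun x hx => by rw [hcon x hx, zero_smul]
      obtain ⟨x₀, hx₀, hcx₀⟩ := hex
      -- the contradiction subcase, used symmetrically
      have contra : (∀ x ∈ R.simple, c' x ≠ 0 → ⟪x, δ⟫ = 0) → False := by
        intro horth'
        have hγδ : ⟪β - δ, δ⟫ = 0 := by
          rw [hrep]
          rw [natRep_cast, sum_inner]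
          refine Finset.sum_eq_zero fun x hx => ?_
          rcases Nat.eq_zero_or_pos (c' x) with h0 | h0
          · rw [h0]; simp
          · rw [real_inner_smul_left, horth' x hx (by omega), mul_zero]
        have hc'δ : c' δ = 0 := by
          by_contra hcon
          have := horth' δ hδ hcon
          have hδδ : 0 < ⟪δ, δ⟫ :=
            BasedRS.inner_self_pos' (R.nonzero δ (R.simple_sub (Finset.mem_coe.mpr hδ)))
          linarith
        have hδδ : 0 < ⟪δ, δ⟫ :=
          BasedRS.inner_self_pos' (R.nonzero δ (R.simple_sub (Finset.mem_coe.mpr hδ)))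
        have h2βδ : 2 * ⟪β, δ⟫ / ⟪δ, δ⟫ = 2 := by
          have : ⟪β, δ⟫ = ⟪δ, δ⟫ := by
            have hb : β = (β - δ) + δ := by abel
            calc ⟪β, δ⟫ = ⟪(β - δ) + δ, δ⟫ := by rw [← hb]
              _ = ⟪β - δ, δ⟫ + ⟪δ, δ⟫ := inner_add_left _ _ _
              _ = ⟪δ, δ⟫ := by rw [hγδ, zero_add]
          rw [this]
          field_simp
        have hrefl := R.reflect β hβ δ (R.simple_sub (Finset.mem_coe.mpr hδ))
        rw [h2βδ] at hrefl
        have hβ2δ : β - (2:ℝ) • δ = (β - δ) - δ := by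
          rw [two_smul]; abel
        rw [hβ2δ] at hrefl
        -- (β - δ) - δ is a root with coefficients c' - 1_δ: mixed signs, contradiction
        have hrep2 : (β - δ) - δ = ∑ x ∈ R.simple,
            (((c' x : ℝ)) - (if x = δ then (1:ℝ) else 0)) • x := by
          have h1 : ∀ x : E, (((c' x : ℝ)) - (if x = δ then (1:ℝ) else 0)) • x
              = ((c' x : ℝ)) • x - (if x = δ then x else 0) := by
            intro x
            rw [sub_smul]
            congr 1
            split <;> simp
          rw [Finset.sum_congr rfl fun x _ => h1 x, Finset.sum_sub_distrib,
            Finset.sum_ite_eq' R.simple δ (fun x => x)]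
          rw [← natRep_cast, ← hrep]
          simp [hδ]
        rcases R.root_sign hrefl hrep2 with hs | hs
        · have := hs δ hδ
          rw [hc'δ, if_pos rfl] at this
          norm_num at this
        · have := hs x₀ hx₀
          have hx₀δ : x₀ ≠ δ := fun he => by rw [he, hc'δ] at hcx₀; exact hcx₀ rfl
          rw [if_neg hx₀δ] at this
          have : ((c' x₀ : ℝ)) ≤ 0 := by linarith
          have : c' x₀ = 0 := by exact_mod_cast le_antisymm this (by positivity)
          exact hcx₀ this
      obtain hl | hr := ih (n - 1) (by omega) (β - δ) c' hroot hrep (by rw [hsum]; omega)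
      · by_cases hPδ : P δ
        · left
          intro x hx hcx
          by_cases hxδ : x = δ
          · rw [hxδ]; exact hPδ
          · exact hl x hx (by rw [hpt x, if_neg hxδ]; exact hcx)
        · exfalso
          apply contra
          intro x hx hcx
          have hPx : P x := hl x hx hcx
          exact horth x hx δ hδ hPx hPδ
      · by_cases hPδ : P δ
        · exfalso
          apply contra
          intro x hx hcx
          have hPx : ¬ P x := hr x hx hcx
          rw [real_inner_comm]
          exact horth δ hδ x hx hPδ hPx
        · right
          intro x hx hcx
          by_cases hxδ : x = δ
          · rw [hxδ]; exact hPδ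
          · exact hr x hx (by rw [hpt x, if_neg hxδ]; exact hcx)

end BasedRS
end Aux6
section Aux7
open Finset
set_option linter.unusedSectionVars false
variable {E : Type} [NormedAddCommGroup E] [InnerProductSpace ℝ E] [DecidableEq E] (R : BasedRS E)
namespace BasedRS

lemma indicator_rep {δ : E} (hδ : δ ∈ R.simple) :
    δ = ∑ x ∈ R.simple, (if x = δ then (1:ℕ) else 0) • x := by
  have h1 : ∀ x : E, (if x = δ then (1:ℕ) else 0) • x = (if x = δ then x else 0) := by
    intro x; split <;> simp
  rw [Finset.sum_congr rfl fun x _ => h1 x, Finset.sum_ite_eq' R.simple δ (fun x => x)]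
  simp [hδ]

lemma rep_mem_span (d : E → ℕ) (s : Finset E) (hs : s ⊆ R.simple)
    (h : ∀ x ∈ R.simple, d x ≠ 0 → x ∈ s) :
    (∑ x ∈ R.simple, d x • x) ∈ Submodule.span ℝ (s : Set E) := by
  have : ∑ x ∈ R.simple, d x • x = ∑ x ∈ s, d x • x := by
    rw [Finset.sum_subset hs]
    intro x hx hxs
    rcases Nat.eq_zero_or_pos (d x) with h0 | h0
    · rw [h0, zero_smul]
    · exact absurd (h x hx (by omega)) hxs
  rw [this]
  refine Submodule.sum_mem _ fun x hx => ?_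
  exact AddSubmonoid.nsmul_mem _ (Submodule.subset_span (Finset.mem_coe.mpr hx)) (d x)

/-- The highest root of an irreducible system has full support. -/
lemma theta_full_support (hirr : R.toCrystRS.Irred) {θ : E} (hθ : R.IsHighest θ)
    {cθ : E → ℕ} (hc : θ = ∑ x ∈ R.simple, cθ x • x) :
    ∀ α ∈ R.simple, 1 ≤ cθ α := by
  by_contra hcon
  push_neg at hcon
  obtain ⟨α₀, hα₀, hα₀c⟩ := hcon
  have hα₀0 : cθ α₀ = 0 := by omega
  have horth := R.support_orth hθ hc
  set S₀ : Finset E := R.simple.filter (fun x => cθ x ≠ 0) with hS₀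
  set T : Finset E := R.simple.filter (fun x => cθ x = 0) with hT
  have hdich := R.support_dichotomy (fun x => cθ x ≠ 0)
    (fun β hβ α hα hPβ hPα => horth β hβ α hα hPβ (by simpa using hPα))
  set A : Set E := R.roots ∩ (Submodule.span ℝ (S₀ : Set E) : Set E) with hA
  set B : Set E := R.roots ∩ (Submodule.span ℝ (T : Set E) : Set E) with hB
  have hcover : R.roots = A ∪ B := by
    ext ρ
    constructor
    · intro hρ
      have hspan : ρ ∈ Submodule.span ℝ (S₀ : Set E) ∨ ρ ∈ Submodule.span ℝ (T : Set E) := by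
        rcases R.decomp ρ hρ with h | h
        · obtain ⟨d, hd⟩ := R.closure_rep h
          rcases hdich _ ρ d hρ hd rfl with hl | hr
          · left
            rw [hd]
            exact R.rep_mem_span d S₀ (Finset.filter_subset _ _)
              (fun x hx hdx => Finset.mem_filter.mpr ⟨hx, hl x hx hdx⟩)
          · right
            rw [hd]
            exact R.rep_mem_span d T (Finset.filter_subset _ _)
              (fun x hx hdx => Finset.mem_filter.mpr ⟨hx, not_not.mp (hr x hx hdx)⟩)
        · obtain ⟨d, hd⟩ := R.closure_rep h
          have hρ' : -ρ ∈ R.roots := R.neg_mem ρ hρ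
          rcases hdich _ (-ρ) d hρ' hd rfl with hl | hr
          · left
            rw [← neg_neg ρ]
            refine Submodule.neg_mem _ ?_
            rw [hd]
            exact R.rep_mem_span d S₀ (Finset.filter_subset _ _)
              (fun x hx hdx => Finset.mem_filter.mpr ⟨hx, hl x hx hdx⟩)
          · right
            rw [← neg_neg ρ]
            refine Submodule.neg_mem _ ?_
            rw [hd]
            exact R.rep_mem_span d T (Finset.filter_subset _ _)
              (fun x hx hdx => Finset.mem_filter.mpr ⟨hx, not_not.mp (hr x hx hdx)⟩)
      rcases hspan with h | h
      · exact Or.inl ⟨hρ, h⟩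
      · exact Or.inr ⟨hρ, h⟩
    · intro hρ
      rcases hρ with h | h
      · exact h.1
      · exact h.1
  have horthAB : ∀ a ∈ A, ∀ b ∈ B, ⟪a, b⟫ = 0 := by
    intro a ha b hb
    refine span_orth S₀ T ?_ a ha.2 b hb.2
    intro x hx y hy
    have hx' := Finset.mem_filter.mp hx
    have hy' := Finset.mem_filter.mp hy
    exact horth x hx'.1 y hy'.1 hx'.2 hy'.2
  rcases hirr A B hcover horthAB with h | h
  · have hθA : θ ∈ A := by
      refine ⟨hθ.1.1, ?_⟩
      rw [hc]
      exact R.rep_mem_span cθ S₀ (Finset.filter_subset _ _)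
        (fun x hx hdx => Finset.mem_filter.mpr ⟨hx, hdx⟩)
    rw [h] at hθA
    exact hθA
  · have hα₀B : α₀ ∈ B := by
      refine ⟨R.simple_sub (Finset.mem_coe.mpr hα₀), ?_⟩
      exact Submodule.subset_span (by simp [hT, hα₀, hα₀0])
    rw [h] at hα₀B
    exact hα₀B

/-- Characterization of `coeffOne` in terms of an ℕ-representation. -/
lemma coeffOne_iff {θ α : E} (hα : α ∈ R.simple) {cθ : E → ℕ}
    (hc : θ = ∑ x ∈ R.simple, cθ x • x) :
    R.coeffOne α θ ↔ cθ α = 1 := by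
  have hset : ((R.simple \ {α} : Finset E) : Set E) = (R.simple : Set E) \ {α} := by
    rw [Finset.coe_sdiff, Finset.coe_singleton]
  constructor
  · intro h
    unfold BasedRS.coeffOne at h
    rw [← hset] at h
    obtain ⟨f, -, hf⟩ := Submodule.mem_span_finset.mp h
    have hf2 : θ - α = ∑ x ∈ R.simple, (if x = α then 0 else f x) • x := by
      rw [← hf, ← Finset.sum_subset (Finset.sdiff_subset : R.simple \ {α} ⊆ R.simple)
        (fun x hx hxs => ?_)]
      · refine Finset.sum_congr rfl fun x hx => ?_
        have hxa : x ≠ α := by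
          rw [Finset.mem_sdiff, Finset.mem_singleton] at hx
          exact hx.2
        rw [if_neg hxa]
      · have hxa : x = α := by
          by_contra hne
          exact hxs (Finset.mem_sdiff.mpr ⟨hx, by simpa using hne⟩)
        rw [hxa, if_pos rfl, zero_smul]
    have hind : ∑ x ∈ R.simple, (if x = α then (1:ℤ) else 0) • x = α := by
      have h1 : ∀ x : E, (if x = α then (1:ℤ) else 0) • x = (if x = α then x else 0) := by
        intro x; split <;> simp
      rw [Finset.sum_congr rfl fun x _ => h1 x, Finset.sum_ite_eq' R.simple α (fun x => x)]
      simp [hα]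
    have hf3 : θ = ∑ x ∈ R.simple,
        ((if x = α then 0 else f x) + (if x = α then 1 else 0)) • x := by
      have hsplit : ∑ x ∈ R.simple,
          ((if x = α then (0:ℤ) else f x) + (if x = α then 1 else 0)) • x
          = (∑ x ∈ R.simple, (if x = α then (0:ℤ) else f x) • x)
            + ∑ x ∈ R.simple, (if x = α then (1:ℤ) else 0) • x := by
        rw [← Finset.sum_add_distrib]
        exact Finset.sum_congr rfl fun x _ => add_smul _ _ _
      rw [hsplit, hind, ← hf2]
      abel
    have hu := R.unique_coeff (c := fun x => ((cθ x : ℝ)))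
      (d := fun x => (((if x = α then (0:ℤ) else f x) + (if x = α then 1 else 0) : ℤ) : ℝ))
      (by rw [← natRep_cast, ← hc, ← intRep_cast, ← hf3]) α hα
    have h2 : ((cθ α : ℝ))
        = (((if α = α then (0:ℤ) else f α) + (if α = α then 1 else 0) : ℤ) : ℝ) := hu
    rw [if_pos rfl, if_pos rfl, zero_add] at h2
    exact_mod_cast h2
  · intro h1
    unfold BasedRS.coeffOne
    rw [← hset]
    have key : ∀ x, cθ x = (if x = α then 0 else cθ x) + (if x = α then 1 else 0) := by
      intro x
      by_cases hxα : x = α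
      · subst hxα; simp [h1]
      · simp [hxα]
    have hind : ∑ x ∈ R.simple, (if x = α then (1:ℕ) else 0) • x = α := by
      have h1' : ∀ x : E, (if x = α then (1:ℕ) else 0) • x = (if x = α then x else 0) := by
        intro x; split <;> simp
      rw [Finset.sum_congr rfl fun x _ => h1' x, Finset.sum_ite_eq' R.simple α (fun x => x)]
      simp [hα]
    have hsplit : θ - α = ∑ x ∈ R.simple, (if x = α then 0 else cθ x) • x := by
      rw [hc]
      have hstep : ∑ x ∈ R.simple, cθ x • x
          = (∑ x ∈ R.simple, (if x = α then 0 else cθ x) • x) + α := by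
        calc ∑ x ∈ R.simple, cθ x • x
            = ∑ x ∈ R.simple, ((if x = α then 0 else cθ x) + (if x = α then 1 else 0)) • x :=
              Finset.sum_congr rfl fun x _ => by rw [← key]
          _ = (∑ x ∈ R.simple, (if x = α then 0 else cθ x) • x)
              + ∑ x ∈ R.simple, (if x = α then (1:ℕ) else 0) • x := by
              rw [← Finset.sum_add_distrib]
              exact Finset.sum_congr rfl fun x _ => add_smul _ _ _
          _ = _ := by rw [hind]
      rw [hstep, add_sub_cancel_right]
    have h2 : ∑ x ∈ R.simple \ {α}, (if x = α then 0 else cθ x) • x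
        = ∑ x ∈ R.simple, (if x = α then 0 else cθ x) • x :=
      Finset.sum_subset Finset.sdiff_subset (fun x hx hxs => by
        have hxa : x = α := by
          by_contra hne
          exact hxs (Finset.mem_sdiff.mpr ⟨hx, by simpa using hne⟩)
        rw [hxa, if_pos rfl, zero_smul])
    have h3 : ∑ x ∈ R.simple \ {α}, (if x = α then 0 else cθ x) • x
        = ∑ x ∈ R.simple \ {α}, cθ x • x :=
      Finset.sum_congr rfl (fun x hx => by
        rw [if_neg (by rw [Finset.mem_sdiff, Finset.mem_singleton] at hx; exact hx.2)])
    rw [hsplit, ← h2, h3]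
    exact Submodule.sum_mem _ fun x hx =>
      AddSubmonoid.nsmul_mem _ (Submodule.subset_span (Finset.mem_coe.mpr hx)) (cθ x)

/-- `count` vs `countP` estimates. -/
lemma count_le_countP (p : E → Prop) [DecidablePred p] (a : E) (hpa : p a) :
    ∀ L : List E, L.count a ≤ L.countP (fun x => decide (p x)) := by
  intro L
  induction L with
  | nil => simp
  | cons x t ih =>
      by_cases hxa : a = x
      · subst hxa
        simp only [List.count_cons, List.countP_cons, beq_self_eq_true, if_true,
          decide_eq_true_eq]
        rw [if_pos hpa]
        simpa using ih
      · simp only [List.count_cons, List.countP_cons]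
        rw [if_neg (by simpa using fun e : x = a => hxa e.symm)]
        have : (0:ℕ) ≤ if decide (p x) = true then 1 else 0 := Nat.zero_le _
        omega

lemma count_two_le_countP (p : E → Prop) [DecidablePred p] (a b : E) (hab : a ≠ b)
    (hpa : p a) (hpb : p b) :
    ∀ L : List E, L.count a + L.count b ≤ L.countP (fun x => decide (p x)) := by
  intro L
  induction L with
  | nil => simp
  | cons x t ih =>
      simp only [List.count_cons, List.countP_cons]
      by_cases hxa : a = x
      · subst hxa
        rw [if_pos (by simp), if_neg (by simpa using hab),
          if_pos (by simpa using hpa)]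
        omega
      · rw [if_neg (by simpa using fun e : x = a => hxa e.symm)]
        by_cases hxb : b = x
        · subst hxb
          rw [if_pos (by simp), if_pos (by simpa using hpb)]
          omega
        · rw [if_neg (by simpa using fun e : x = b => hxb e.symm)]
          have : (0:ℕ) ≤ if decide (p x) = true then 1 else 0 := Nat.zero_le _
          omega

end BasedRS
end Aux7
theorem statement12 {E : Type} [NormedAddCommGroup E] [InnerProductSpace ℝ E]
    [DecidableEq E] (R : BasedRS E) (hirr : R.toCrystRS.Irred)
    (θ : E) (hθ : R.IsHighest θ)
    (S : Finset E) (hS : S ⊆ R.simple) :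
    (∀ β ∈ R.pos \ (R.roots ∩ (Submodule.span ℤ (S : Set E) : Set E)),
      ∀ γ ∈ R.pos, R.le β γ →
        γ ∈ R.pos \ (R.roots ∩ (Submodule.span ℤ (S : Set E) : Set E))) ∧
    ((∀ β ∈ R.pos \ (R.roots ∩ (Submodule.span ℤ (S : Set E) : Set E)),
      ∀ γ ∈ R.pos \ (R.roots ∩ (Submodule.span ℤ (S : Set E) : Set E)),
        β + γ ∉ R.roots) ↔
      (S = R.simple ∨ ∃ α ∈ R.simple, S = R.simple \ {α} ∧ R.coeffOne α θ)) := by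
  classical
  constructor
  · -- upward closedness
    rintro β ⟨hβpos, hβnot⟩ γ hγpos hle
    refine ⟨hγpos, ?_⟩
    rintro ⟨hγroots, hγspan⟩
    apply hβnot
    refine ⟨hβpos.1, ?_⟩
    obtain ⟨b, hb⟩ := R.closure_rep hβpos.2
    obtain ⟨e, he⟩ := R.closure_rep (show γ - β ∈ _ from hle)
    have hγrep : γ = ∑ x ∈ R.simple, (b x + e x) • x := by
      have h0 : ∑ x ∈ R.simple, (b x + e x) • x
          = (∑ x ∈ R.simple, b x • x) + ∑ x ∈ R.simple, e x • x := by
        rw [← Finset.sum_add_distrib]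
        exact Finset.sum_congr rfl fun x _ => add_smul _ _ _
      rw [h0, ← hb, ← he]
      abel
    have hz := (R.mem_span_iff_coeff S hS _ hγrep).mp hγspan
    refine (R.mem_span_iff_coeff S hS b hb).mpr (fun x hx hxS => ?_)
    have := hz x hx hxS
    omega
  constructor
  · -- abelian implies the classification
    intro habel
    by_contra hcon
    push_neg at hcon
    obtain ⟨hSne, hspec⟩ := hcon
    obtain ⟨cθ, hcθ⟩ := R.closure_rep hθ.1.2
    have hfull := R.theta_full_support hirr hθ hcθ
    have hθroot : θ ∈ R.roots := hθ.1.1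
    obtain ⟨L, hLmem, hLne, hLsum, hLpref⟩ := R.chain_exists _ θ cθ hθroot hcθ rfl
    have hcount : ∀ x ∈ R.simple, L.count x = cθ x := by
      intro x hx
      have h1 : L.sum = ∑ α ∈ R.simple, (L.count α) • α := list_sum_count R.simple L hLmem
      have h2 := R.unique_coeff (c := fun x => ((L.count x : ℝ)))
        (d := fun x => ((cθ x : ℝ)))
        ((natRep_cast _ _).symm.trans
          (((h1.symm.trans hLsum).trans hcθ).trans (natRep_cast _ _))) x hx
      have h3 : ((L.count x : ℝ)) = ((cθ x : ℝ)) := h2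
      exact_mod_cast h3
    obtain ⟨α, hαsimple, hαS⟩ : ∃ α ∈ R.simple, α ∉ S := by
      by_contra hc
      push_neg at hc
      exact hSne (Finset.Subset.antisymm hS (fun x hx => hc x hx))
    have hcp : 2 ≤ L.countP (fun x => decide (x ∉ S)) := by
      by_cases hex : ∃ β ∈ R.simple, β ∉ S ∧ β ≠ α
      · obtain ⟨β, hβs, hβS, hβα⟩ := hex
        calc 2 ≤ cθ α + cθ β := Nat.add_le_add (hfull α hαsimple) (hfull β hβs)
          _ = L.count α + L.count β := by rw [hcount α hαsimple, hcount β hβs]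
          _ ≤ _ := BasedRS.count_two_le_countP (fun x => x ∉ S) α β (Ne.symm hβα) hαS hβS L
      · push_neg at hex
        have hSeq : S = R.simple \ {α} := by
          ext x
          simp only [Finset.mem_sdiff, Finset.mem_singleton]
          constructor
          · intro hxS
            exact ⟨hS hxS, fun he => hαS (he ▸ hxS)⟩
          · rintro ⟨hxs, hxα⟩
            by_contra hxS
            exact hxα (hex x hxs hxS)
        have hnc1 := hspec α hαsimple hSeq
        have hne1 : cθ α ≠ 1 := fun h => hnc1 ((R.coeffOne_iff hαsimple hcθ).mpr h)
        have h2 : 2 ≤ cθ α := by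
          have := hfull α hαsimple
          omega
        calc 2 ≤ cθ α := h2
          _ = L.count α := (hcount α hαsimple).symm
          _ ≤ _ := BasedRS.count_le_countP (fun x => x ∉ S) α hαS L
    obtain ⟨k, hk, hpk, hpref⟩ := two_count_split (fun x => x ∉ S) L hcp
    have hk1 : 1 ≤ k := by
      by_contra h
      push_neg at h
      have hk0 : k = 0 := by omega
      rw [hk0] at hpref
      simp at hpref
    have hγpos : (L.take k).sum ∈ R.pos := hLpref k hk1 (le_of_lt hk)
    obtain ⟨xh, hxhmem, hxhS⟩ : ∃ x ∈ L.take k, x ∉ S := by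
      by_contra hc
      push_neg at hc
      have : (L.take k).countP (fun x => decide (x ∉ S)) = 0 := by
        rw [List.countP_eq_zero]
        intro x hx
        simpa using hc x hx
      omega
    have htakemem : ∀ a ∈ L.take k, a ∈ R.simple :=
      fun a ha => hLmem a (List.mem_of_mem_take ha)
    have hγrep : (L.take k).sum = ∑ x ∈ R.simple, ((L.take k).count x) • x :=
      list_sum_count R.simple _ htakemem
    have hγnot : (L.take k).sum ∉ Submodule.span ℤ (S : Set E) := by
      intro hsp
      have h1 := (R.mem_span_iff_coeff S hS _ hγrep).mp hsp xh (htakemem _ hxhmem) hxhS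
      have h2 : 0 < (L.take k).count xh := List.count_pos_iff.mpr hxhmem
      omega
    have hδsimple : L[k] ∈ R.simple := hLmem _ (List.getElem_mem hk)
    have hδpos : L[k] ∈ R.pos :=
      ⟨R.simple_sub (Finset.mem_coe.mpr hδsimple),
        AddSubmonoid.subset_closure (Finset.mem_coe.mpr hδsimple)⟩
    have hδnot : L[k] ∉ Submodule.span ℤ (S : Set E) := by
      intro hsp
      have := (R.mem_span_iff_coeff S hS _ (R.indicator_rep hδsimple)).mp hsp
        (L[k]) hδsimple hpk
      simp at this
    have hsumroot : (L.take k).sum + L[k] ∈ R.roots := by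
      have h1 : (L.take (k+1)).sum ∈ R.pos := hLpref (k+1) (by omega) (by omega)
      have h2 : (L.take (k+1)).sum = (L.take k).sum + L[k] := List.sum_take_succ L k hk
      rw [← h2]
      exact h1.1
    exact habel _ ⟨hγpos, fun hm => hγnot hm.2⟩ _ ⟨hδpos, fun hm => hδnot hm.2⟩ hsumroot
  · -- the classification implies abelian
    rintro (hSeq | ⟨α, hα, hSeq, hco⟩)
    · subst hSeq
      intro β hβ γ hγ hsum
      exfalso
      apply hβ.2
      refine ⟨hβ.1.1, ?_⟩
      obtain ⟨b, hb⟩ := R.closure_rep hβ.1.2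
      exact (R.mem_span_iff_coeff R.simple (le_refl _) b hb).mpr
        (fun x hx hxS => absurd hx hxS)
    · have hαS : α ∉ S := by
        rw [hSeq]
        simp
      obtain ⟨cθ, hcθ⟩ := R.closure_rep hθ.1.2
      have hcθα : cθ α = 1 := (R.coeffOne_iff hα hcθ).mp hco
      have hcoeff : ∀ ρ ∈ R.pos \ (R.roots ∩ (Submodule.span ℤ (S : Set E) : Set E)),
          ∀ r : E → ℕ, ρ = ∑ x ∈ R.simple, r x • x → r α = 1 := by
        intro ρ hρ r hr
        have hρpos : ρ ∈ R.pos := hρ.1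
        have hρnot : ρ ∉ Submodule.span ℤ (S : Set E) := fun h => hρ.2 ⟨hρpos.1, h⟩
        have hge : 1 ≤ r α := by
          by_contra h
          push_neg at h
          have h0 : r α = 0 := by omega
          apply hρnot
          refine (R.mem_span_iff_coeff S hS r hr).mpr (fun x hx hxS => ?_)
          have hxα : x = α := by
            by_contra hne
            exact hxS (hSeq ▸ Finset.mem_sdiff.mpr ⟨hx, by simpa using hne⟩)
          rw [hxα]
          exact h0
        have hle := hθ.2 ρ hρpos.1
        obtain ⟨e, he⟩ := R.closure_rep (show θ - ρ ∈ _ from hle)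
        have hθrep2 : θ = ∑ x ∈ R.simple, (r x + e x) • x := by
          have h0 : ∑ x ∈ R.simple, (r x + e x) • x
              = (∑ x ∈ R.simple, r x • x) + ∑ x ∈ R.simple, e x • x := by
            rw [← Finset.sum_add_distrib]
            exact Finset.sum_congr rfl fun x _ => add_smul _ _ _
          rw [h0, ← hr, ← he]
          abel
        have h2 := R.unique_coeff (c := fun x => ((cθ x : ℝ)))
          (d := fun x => (((r x + e x : ℕ)) : ℝ))
          ((natRep_cast _ _).symm.trans ((hcθ.symm.trans hθrep2).trans (natRep_cast _ _))) α hα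
        have h3 : ((cθ α : ℝ)) = (((r α + e α : ℕ)) : ℝ) := h2
        have h4 : cθ α = r α + e α := by exact_mod_cast h3
        omega
      intro β hβ γ hγ hsum
      obtain ⟨b, hb⟩ := R.closure_rep hβ.1.2
      obtain ⟨g, hg⟩ := R.closure_rep hγ.1.2
      have hβ1 := hcoeff β hβ b hb
      have hγ1 := hcoeff γ hγ g hg
      have hsrep : β + γ = ∑ x ∈ R.simple, (b x + g x) • x := by
        rw [hb, hg, ← Finset.sum_add_distrib]
        exact Finset.sum_congr rfl fun x _ => (add_smul _ _ _).symm
      have hmem : β + γ ∈ R.pos \ (R.roots ∩ (Submodule.span ℤ (S : Set E) : Set E)) := by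
        refine ⟨⟨hsum, AddSubmonoid.add_mem _ hβ.1.2 hγ.1.2⟩, ?_⟩
        rintro ⟨_, hsp⟩
        have := (R.mem_span_iff_coeff S hS _ hsrep).mp hsp α hα hαS
        omega
      have h2 := hcoeff (β + γ) hmem _ hsrep
      omega
end
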